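/- arXiv:2212.07762 — 3 statements merged into one kernel-verified Lean document; each statement's English description precedes it below -/
import Mathlib

section
/- Let ĝ = (g₁,g₂,g₃) : V → (0,1)³ be a C² function on a neighbourhood V of [−1,1]×𝕋^{d−1} satisfying, for some 0 < c* < C* < 1, c* ≤ g_i ≤ C* for each i and g₁+g₂+g₃ < 1, and set α̂_N(x) = ĝ(x/N) for x ∈ B_N. Then there exists a constant C₁ > 0, depending only on d, D and ĝ, such that for every N ≥ 1 and every density f with respect to ν^N_{α̂_N}: Σ_{(ξ,ω)} (𝓛_N √f)(ξ,ω) · √f(ξ,ω) · ν^N_{α̂_N}(ξ,ω) ≤ −(1/4) 𝒟_N(f, ν^N_{α̂_N}) + C₁ N^{d−2}. -/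
open Finset

noncomputable section

namespace SIT

/-- Sites of the box `B_N = {−N,…,N} × (ℤ/Nℤ)^{d−1}`: the first coordinate
`v : Fin (2N+1)` represents the integer `v − N`; the `d−1` transverse
coordinates are periodic of period `N`. -/
abbrev Site (d N : ℕ) : Type := Fin (2 * N + 1) × (Fin (d - 1) → Fin N)

/-- Configurations `(ξ, ω)` of the process: at each site, the pair
`(ξ(x), ω(x)) ∈ {0,1} × {0,1}`. -/
abbrev Config (d N : ℕ) : Type := Site d N → Bool × Bool

variable {d N : ℕ}

/-- The state in `{0,1,2,3}` of a pair `(ξ(x), ω(x))`: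
`(0,0) ↦ 0`, `(1,0) ↦ 1`, `(0,1) ↦ 2`, `(1,1) ↦ 3`. -/
def state : Bool × Bool → Fin 4
  | (false, false) => 0
  | (true, false) => 1
  | (false, true) => 2
  | (true, true) => 3

/-- The pair `(ξ(x), ω(x))` corresponding to a state `i ∈ {0,1,2,3}`. -/
def pairOfState (i : Fin 4) : Bool × Bool :=
  if i = 0 then (false, false) else if i = 1 then (true, false)
    else if i = 2 then (false, true) else (true, true)

/-- `η_i(x)`, as a real-valued indicator. -/
def eta (i : Fin 4) (η : Config d N) (x : Site d N) : ℝ :=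
  if state (η x) = i then 1 else 0

/-- Cyclic successor in `Fin N`. -/
def cyc {N : ℕ} (v : Fin N) : Fin N :=
  ⟨(v.val + 1) % N, Nat.mod_lt _ (Nat.lt_of_le_of_lt (Nat.zero_le _) v.isLt)⟩

/-- `x + e_k`, when it lies in the box `B_N` (the first direction is
non-periodic, the transverse ones are periodic). -/
def step (k : Fin d) (x : Site d N) : Option (Site d N) :=
  if k.val = 0 then
    if h : x.1.val + 1 < 2 * N + 1 then some (⟨x.1.val + 1, h⟩, x.2) else none
  else
    some (x.1, fun j => if j.val = k.val - 1 then cyc (x.2 j) else x.2 j)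

/-- The configuration `(ξ^{x,y}, ω^{x,y})` with the values at `x` and `y` exchanged. -/
def swap (x y : Site d N) (η : Config d N) : Config d N :=
  fun z => if z = x then η y else if z = y then η x else η z

/-- Flip the `ξ`-value at `x` (i.e. `(σ^x ξ, ω)`). -/
def flipXi (x : Site d N) (η : Config d N) : Config d N :=
  Function.update η x (!(η x).1, (η x).2)

/-- Flip the `ω`-value at `x` (i.e. `(ξ, σ^x ω)`). -/
def flipOmega (x : Site d N) (η : Config d N) : Config d N :=
  Function.update η x ((η x).1, !(η x).2)

/-- `σ_{i,x}(ξ,ω)`: the configuration agreeing with `(ξ,ω)` off `x` and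
whose state at `x` is `i`. -/
def setState (i : Fin 4) (x : Site d N) (η : Config d N) : Config d N :=
  Function.update η x (pairOfState i)

/-- A boolean as a real number. -/
def b2r (b : Bool) : ℝ := if b then 1 else 0

/-- The nearest-neighbour relation on `B_N`. -/
def nbr (x y : Site d N) : Prop :=
  ∃ k : Fin d, step k x = some y ∨ step k y = some x

instance (x y : Site d N) : Decidable (nbr x y) :=
  inferInstanceAs (Decidable (∃ k : Fin d, step k x = some y ∨ step k y = some x))

/-- `n_i(x,η)`: the number of nearest neighbours of `x` in state `i`. -/
def nCount (i : Fin 4) (x : Site d N) (η : Config d N) : ℝ :=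
  ∑ y : Site d N, if nbr x y then eta i η y else 0

/-- The birth rate `β(x,ξ,ω) = λ₁ n₁(x) + λ₂ n₃(x)`. -/
def beta (lam1 lam2 : ℝ) (x : Site d N) (η : Config d N) : ℝ :=
  lam1 * nCount 1 x η + lam2 * nCount 3 x η

/-- The exchange (stirring) generator `𝓛_N` with diffusivity `D`. -/
def exchGen (D : ℝ) (f : Config d N → ℝ) (η : Config d N) : ℝ :=
  D * ∑ k : Fin d, ∑ x : Site d N,
    (step k x).elim 0 fun y => f (swap x y η) - f η

/-- The generalized contact process generator `𝕃_N`. -/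
def contactGen (lam1 lam2 r : ℝ) (f : Config d N → ℝ) (η : Config d N) : ℝ :=
  ∑ x : Site d N,
    ((r * (1 - b2r (η x).2) + b2r (η x).2) * (f (flipOmega x η) - f η)
      + (beta lam1 lam2 x η * (1 - b2r (η x).1) + b2r (η x).1) * (f (flipXi x η) - f η))

/-- The left boundary `Γ_N^-` (first coordinate `−N`). -/
def leftB (d N : ℕ) : Finset (Site d N) := univ.filter fun x => x.1.val = 0

/-- The right boundary `Γ_N^+` (first coordinate `N`). -/
def rightB (d N : ℕ) : Finset (Site d N) := univ.filter fun x => x.1.val = 2 * N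

/-- The quadruple of rates `(b₀,b₁,b₂,b₃)` built from `(b₁,b₂,b₃)`,
with `b₀ = 1 − b₁ − b₂ − b₃`. -/
def rate4 (b1 b2 b3 : Site d N → ℝ) : Fin 4 → Site d N → ℝ :=
  fun i => if i = 1 then b1 else if i = 2 then b2 else if i = 3 then b3
    else fun x => 1 - b1 x - b2 x - b3 x

/-- The boundary generator `L_{b̂,θ̂,N}`. -/
def bdryGen (b1 b2 b3 : Site d N → ℝ) (θl θr : ℝ) (f : Config d N → ℝ)
    (η : Config d N) : ℝ :=
  (N : ℝ) ^ (-θl) * ∑ i : Fin 4, ∑ x ∈ leftB d N,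
      rate4 b1 b2 b3 i x * (f (setState i x η) - f η)
  + (N : ℝ) ^ (-θr) * ∑ i : Fin 4, ∑ x ∈ rightB d N,
      rate4 b1 b2 b3 i x * (f (setState i x η) - f η)

/-- The full generator `L_N = N²𝓛_N + N²L_{b̂,θ̂,N} + 𝕃_N`. -/
def fullGen (D lam1 lam2 r : ℝ) (b1 b2 b3 : Site d N → ℝ) (θl θr : ℝ)
    (f : Config d N → ℝ) (η : Config d N) : ℝ :=
  (N : ℝ) ^ (2 : ℕ) * exchGen D f η + (N : ℝ) ^ (2 : ℕ) * bdryGen b1 b2 b3 θl θr f η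
    + contactGen lam1 lam2 r f η

/-- The weight `ν^N_α̂(ξ,ω) = ∏_x α_{state(x)}(x)` of the product measure. -/
def nu (a1 a2 a3 : Site d N → ℝ) (η : Config d N) : ℝ :=
  ∏ x : Site d N, rate4 a1 a2 a3 (state (η x)) x

/-- The macroscopic point `x/N ∈ [−1,1] × 𝕋^{d−1}`, lifted to `ℝ × ℝ^{d−1}`. -/
def pt (x : Site d N) : ℝ × (Fin (d - 1) → ℝ) :=
  (((x.1.val : ℝ) - N) / N, fun j => ((x.2 j).val : ℝ) / N)

/-- The exchange Dirichlet form `𝒟_N(f,ν^N_α̂)`. -/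
def exchDirForm (D : ℝ) (a1 a2 a3 : Site d N → ℝ) (f : Config d N → ℝ) : ℝ :=
  D * ∑ k : Fin d, ∑ x : Site d N,
    (step k x).elim 0 fun y => ∑ η : Config d N,
      (Real.sqrt (f (swap x y η)) - Real.sqrt (f η)) ^ 2 * nu a1 a2 a3 η

/-- The boundary Dirichlet form `D_{b̂,θ̂,N}(f,ν^N_α̂)`. -/
def bdryDirForm (b1 b2 b3 : Site d N → ℝ) (θl θr : ℝ) (a1 a2 a3 : Site d N → ℝ)
    (f : Config d N → ℝ) : ℝ :=
  (N : ℝ) ^ (-θl) * ∑ i : Fin 4, ∑ x ∈ leftB d N, ∑ η : Config d N,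
      rate4 b1 b2 b3 i x * (1 - eta i η x)
        * (Real.sqrt (f (setState i x η)) - Real.sqrt (f η)) ^ 2 * nu a1 a2 a3 η
  + (N : ℝ) ^ (-θr) * ∑ i : Fin 4, ∑ x ∈ rightB d N, ∑ η : Config d N,
      rate4 b1 b2 b3 i x * (1 - eta i η x)
        * (Real.sqrt (f (setState i x η)) - Real.sqrt (f η)) ^ 2 * nu a1 a2 a3 η



/-! ### Auxiliary lemmas for Statement 5 -/

lemma swap_self (x : Site d N) (η : Config d N) : swap x x η = η := by
  funext z; simp only [swap]; split_ifs with h <;> simp [h]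

lemma swap_apply_fst (x y : Site d N) (η : Config d N) : swap x y η x = η y := by
  simp [swap]

lemma swap_apply_snd (x y : Site d N) (hxy : x ≠ y) (η : Config d N) :
    swap x y η y = η x := by
  simp [swap, Ne.symm hxy]

lemma swap_apply_other (x y z : Site d N) (hzx : z ≠ x) (hzy : z ≠ y) (η : Config d N) :
    swap x y η z = η z := by
  simp [swap, hzx, hzy]

lemma swap_invol (x y : Site d N) : Function.Involutive (swap x y) := by
  rcases eq_or_ne x y with rfl | hxy
  · intro η; rw [swap_self, swap_self]
  · intro η; funext z
    by_cases hzx : z = x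
    · rw [hzx, swap_apply_fst, swap_apply_snd x y hxy]
    · by_cases hzy : z = y
      · rw [hzy, swap_apply_snd x y hxy, swap_apply_fst]
      · rw [swap_apply_other x y z hzx hzy, swap_apply_other x y z hzx hzy]

private lemma edge_est {S : Type*} [Fintype S] (σ : S → S) (hσ : Function.Involutive σ)
    (ν : S → ℝ) (hν : ∀ η, 0 ≤ ν η) (c : ℝ) (hc : 0 ≤ c)
    (hratio : ∀ η, |ν (σ η) - ν η| ≤ c * ν η)
    (f : S → ℝ) (hf : ∀ η, 0 ≤ f η) (hsum : ∑ η, f η * ν η = 1) :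
    ∑ η, (Real.sqrt (f (σ η)) - Real.sqrt (f η)) * Real.sqrt (f η) * ν η
      ≤ -(1/4) * (∑ η, (Real.sqrt (f (σ η)) - Real.sqrt (f η)) ^ 2 * ν η)
        + c ^ 2 * (2 + c) / 2 := by
  have hchange : ∀ F : S → ℝ, ∑ η, F (σ η) = ∑ η, F η := fun F =>
    Fintype.sum_bijective σ hσ.bijective _ F (fun _ => rfl)
  have hsq : ∀ η, Real.sqrt (f η) ^ 2 = f η := fun η => Real.sq_sqrt (hf η)
  have hE0 : 0 ≤ ∑ η, (Real.sqrt (f (σ η)) - Real.sqrt (f η)) ^ 2 * ν η :=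
    Finset.sum_nonneg fun η _ => mul_nonneg (sq_nonneg _) (hν η)
  have hT : ∑ η, (Real.sqrt (f (σ η)) - Real.sqrt (f η)) * Real.sqrt (f η) * ν η
      = -(1/2) * (∑ η, (Real.sqrt (f (σ η)) - Real.sqrt (f η)) ^ 2 * ν η)
        + (1/2) * ∑ η, (f (σ η) - f η) * ν η := by
    rw [Finset.mul_sum, Finset.mul_sum, ← Finset.sum_add_distrib]
    refine Finset.sum_congr rfl fun η _ => ?_
    have h1 := hsq η; have h2 := hsq (σ η)
    linear_combination (ν η / 2) * h2 - (ν η / 2) * h1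
  have hchg : ∑ η, f (σ η) * ν η = ∑ η, f η * ν (σ η) := by
    have h := hchange (fun η => f η * ν (σ η))
    simp only [hσ _] at h
    exact h
  have hR1 : ∑ η, (f (σ η) - f η) * ν η = ∑ η, f η * (ν (σ η) - ν η) := by
    simp only [sub_mul, mul_sub, Finset.sum_sub_distrib, hchg]
  have hR2 : ∑ η, f η * (ν (σ η) - ν η)
      = (1/2) * ∑ η, (f η - f (σ η)) * (ν (σ η) - ν η) := by
    have h := hchange (fun η => f η * (ν (σ η) - ν η))
    simp only [hσ _] at h
    -- h : ∑ η, f (σ η) * (ν η - ν (σ η)) = ∑ η, f η * (ν (σ η) - ν η)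
    have h2 : ∑ η, f η * (ν (σ η) - ν η) + ∑ η, f (σ η) * (ν η - ν (σ η))
        = ∑ η, (f η - f (σ η)) * (ν (σ η) - ν η) := by
      rw [← Finset.sum_add_distrib]
      exact Finset.sum_congr rfl fun η _ => by ring
    linarith [h, h2]
  have hpt : ∀ η, (f η - f (σ η)) * (ν (σ η) - ν η)
      ≤ (1/2) * ((Real.sqrt (f (σ η)) - Real.sqrt (f η)) ^ 2 * ν η)
        + c ^ 2 * ((f η + f (σ η)) * ν η) := by
    intro η
    have ha : 0 ≤ Real.sqrt (f η) := Real.sqrt_nonneg _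
    have hb : 0 ≤ Real.sqrt (f (σ η)) := Real.sqrt_nonneg _
    have h1 := hsq η
    have h2 := hsq (σ η)
    have hw : 0 ≤ ν η := hν η
    have habs : (f η - f (σ η)) * (ν (σ η) - ν η)
        ≤ |Real.sqrt (f η) - Real.sqrt (f (σ η))|
            * (Real.sqrt (f η) + Real.sqrt (f (σ η))) * (c * ν η) := by
      calc (f η - f (σ η)) * (ν (σ η) - ν η)
          ≤ |(f η - f (σ η)) * (ν (σ η) - ν η)| := le_abs_self _
        _ = |f η - f (σ η)| * |ν (σ η) - ν η| := abs_mul _ _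
        _ ≤ |f η - f (σ η)| * (c * ν η) :=
            mul_le_mul_of_nonneg_left (hratio η) (abs_nonneg _)
        _ = |Real.sqrt (f η) - Real.sqrt (f (σ η))|
              * (Real.sqrt (f η) + Real.sqrt (f (σ η))) * (c * ν η) := by
            have hfac : |f η - f (σ η)| = |Real.sqrt (f η) - Real.sqrt (f (σ η))|
                * (Real.sqrt (f η) + Real.sqrt (f (σ η))) := by
              have hd : f η - f (σ η) = (Real.sqrt (f η) - Real.sqrt (f (σ η)))
                  * (Real.sqrt (f η) + Real.sqrt (f (σ η))) := by
                linear_combination h2 - h1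
              rw [hd, abs_mul, abs_of_nonneg (add_nonneg ha hb)]
            rw [hfac]
    refine habs.trans ?_
    set a := Real.sqrt (f η) with ha2
    set b := Real.sqrt (f (σ η)) with hb2
    rw [← h1, ← h2]
    nlinarith [mul_nonneg hw (sq_nonneg (|a - b| - c * (a + b))), sq_abs (a - b),
      mul_nonneg (mul_nonneg (sq_nonneg c) hw) (sq_nonneg (a - b))]
  have hfσ : ∑ η, f (σ η) * ν η ≤ 1 + c := by
    rw [hchg]
    calc ∑ η, f η * ν (σ η) ≤ ∑ η, f η * ((1 + c) * ν η) := by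
          refine Finset.sum_le_sum fun η _ => ?_
          refine mul_le_mul_of_nonneg_left ?_ (hf η)
          have := (abs_le.1 (hratio η)).2
          linarith
      _ = (1 + c) * ∑ η, f η * ν η := by
          rw [Finset.mul_sum]
          exact Finset.sum_congr rfl fun η _ => by ring
      _ = 1 + c := by rw [hsum, mul_one]
  have hfsum : ∑ η, (f η + f (σ η)) * ν η ≤ 2 + c := by
    have hsplit : ∑ η, (f η + f (σ η)) * ν η
        = (∑ η, f η * ν η) + ∑ η, f (σ η) * ν η := by
      rw [← Finset.sum_add_distrib]
      exact Finset.sum_congr rfl fun η _ => by ring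
    rw [hsplit, hsum]; linarith
  have hRbound : ∑ η, (f η - f (σ η)) * (ν (σ η) - ν η)
      ≤ (1/2) * (∑ η, (Real.sqrt (f (σ η)) - Real.sqrt (f η)) ^ 2 * ν η)
        + c ^ 2 * (2 + c) := by
    calc ∑ η, (f η - f (σ η)) * (ν (σ η) - ν η)
        ≤ ∑ η, ((1/2) * ((Real.sqrt (f (σ η)) - Real.sqrt (f η)) ^ 2 * ν η)
            + c ^ 2 * ((f η + f (σ η)) * ν η)) := Finset.sum_le_sum fun η _ => hpt η
      _ = (1/2) * (∑ η, (Real.sqrt (f (σ η)) - Real.sqrt (f η)) ^ 2 * ν η)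
            + c ^ 2 * ∑ η, (f η + f (σ η)) * ν η := by
          rw [Finset.sum_add_distrib, ← Finset.mul_sum, ← Finset.mul_sum]
      _ ≤ (1/2) * (∑ η, (Real.sqrt (f (σ η)) - Real.sqrt (f η)) ^ 2 * ν η)
            + c ^ 2 * (2 + c) := by
          have := mul_le_mul_of_nonneg_left hfsum (sq_nonneg c)
          linarith
  have hcc : 0 ≤ c ^ 2 * (2 + c) := mul_nonneg (sq_nonneg c) (by linarith)
  rw [hT, hR1, hR2]
  linarith [hRbound, hE0]

private lemma prod_swap_bound {S : Type*} [Fintype S] [DecidableEq S]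
    (F G : S → ℝ) (cs' L : ℝ) (hcs' : 0 < cs')
    (hlF : ∀ z, cs' ≤ F z) (hlG : ∀ z, cs' ≤ G z)
    (huF : ∀ z, F z ≤ 1) (huG : ∀ z, G z ≤ 1)
    (x y : S) (hxy : x ≠ y)
    (hoff : ∀ z, z ≠ x → z ≠ y → G z = F z)
    (hxL : |G x - F y| ≤ L) (hyL : |G y - F x| ≤ L) :
    |(∏ z, G z) - ∏ z, F z| ≤ 2 * L / cs' ^ 2 * ∏ z, F z := by
  have hymem : y ∈ Finset.univ.erase x :=
    Finset.mem_erase.2 ⟨Ne.symm hxy, Finset.mem_univ y⟩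
  have hF : ∏ z, F z = F x * (F y * ∏ z ∈ (Finset.univ.erase x).erase y, F z) := by
    rw [Finset.mul_prod_erase _ _ hymem, Finset.mul_prod_erase _ _ (Finset.mem_univ x)]
  have hG : ∏ z, G z = G x * (G y * ∏ z ∈ (Finset.univ.erase x).erase y, F z) := by
    rw [show (∏ z ∈ (Finset.univ.erase x).erase y, F z)
        = ∏ z ∈ (Finset.univ.erase x).erase y, G z from
      Finset.prod_congr rfl fun z hz => (hoff z
        (Finset.mem_erase.1 (Finset.mem_of_mem_erase hz)).1
        (Finset.mem_erase.1 hz).1).symm,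
      Finset.mul_prod_erase _ _ hymem, Finset.mul_prod_erase _ _ (Finset.mem_univ x)]
  set P := ∏ z ∈ (Finset.univ.erase x).erase y, F z with hP
  have hL0 : 0 ≤ L := le_trans (abs_nonneg _) hxL
  have hPpos : 0 < P := Finset.prod_pos fun z _ => lt_of_lt_of_le hcs' (hlF z)
  have hbd : |G x * G y - F x * F y| ≤ 2 * L := by
    rw [show G x * G y - F x * F y = G x * (G y - F x) + F x * (G x - F y) from by ring]
    calc |G x * (G y - F x) + F x * (G x - F y)|
        ≤ |G x * (G y - F x)| + |F x * (G x - F y)| := abs_add_le _ _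
      _ = |G x| * |G y - F x| + |F x| * |G x - F y| := by rw [abs_mul, abs_mul]
      _ ≤ 1 * L + 1 * L := add_le_add
          (mul_le_mul (by rw [abs_of_nonneg (le_trans hcs'.le (hlG x))]; exact huG x)
            hyL (abs_nonneg _) zero_le_one)
          (mul_le_mul (by rw [abs_of_nonneg (le_trans hcs'.le (hlF x))]; exact huF x)
            hxL (abs_nonneg _) zero_le_one)
      _ = 2 * L := by ring
  rw [hG, hF, show G x * (G y * P) - F x * (F y * P)
      = (G x * G y - F x * F y) * P from by ring, abs_mul, abs_of_pos hPpos]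
  have hc2 : cs' * cs' ≤ F x * F y :=
    mul_le_mul (hlF x) (hlF y) hcs'.le (le_trans hcs'.le (hlF x))
  calc |G x * G y - F x * F y| * P ≤ 2 * L * P :=
        mul_le_mul_of_nonneg_right hbd hPpos.le
    _ = 2 * L / cs' ^ 2 * (cs' ^ 2 * P) := by field_simp
    _ ≤ 2 * L / cs' ^ 2 * (F x * (F y * P)) := by
        refine mul_le_mul_of_nonneg_left ?_
          (div_nonneg (by linarith) (by positivity))
        nlinarith [hPpos]

set_option maxHeartbeats 2000000 in
/-- Bound on the exchange Dirichlet form term: for a smooth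
profile `α̂_N(x) = ĝ(x/N)` there is a constant `C₁ > 0` (depending only on `d`,
`D` and `ĝ`) such that `⟨𝓛_N √f, √f⟩_{ν} ≤ −(1/4)𝒟_N(f,ν) + C₁ N^{d−2}` for
every `N ≥ 1` and every density `f` with respect to `ν = ν^N_{α̂_N}`. -/
theorem exchange_dirichlet_bound (d : ℕ) (hd : 1 ≤ d) (D : ℝ) (hD : 0 < D)
    (cs Cs : ℝ) (hcs : 0 < cs) (hcsCs : cs < Cs) (hCs : Cs < 1)
    (V : Set (ℝ × (Fin (d - 1) → ℝ))) (hV : IsOpen V)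
    (hVslab : {p : ℝ × (Fin (d - 1) → ℝ) | p.1 ∈ Set.Icc (-1 : ℝ) 1} ⊆ V)
    (hVper : ∀ p ∈ V, ∀ j : Fin (d - 1), (p.1, Function.update p.2 j (p.2 j + 1)) ∈ V)
    (g : Fin 3 → (ℝ × (Fin (d - 1) → ℝ)) → ℝ)
    (hg : ∀ i, ContDiffOn ℝ 2 (g i) V)
    (hgper : ∀ (i : Fin 3) (p : ℝ × (Fin (d - 1) → ℝ)) (j : Fin (d - 1)),
      g i (p.1, Function.update p.2 j (p.2 j + 1)) = g i p)
    (hgbd : ∀ i : Fin 3, ∀ p ∈ V, cs ≤ g i p ∧ g i p ≤ Cs)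
    (hgsum : ∀ p ∈ V, g 0 p + g 1 p + g 2 p < 1) :
    ∃ C1 : ℝ, 0 < C1 ∧ ∀ N : ℕ, 1 ≤ N → ∀ f : Config d N → ℝ,
      (∀ η, 0 ≤ f η) →
      (∑ η : Config d N,
        f η * nu (fun x => g 0 (pt x)) (fun x => g 1 (pt x)) (fun x => g 2 (pt x)) η = 1) →
      ∑ η : Config d N, exchGen D (fun σ => Real.sqrt (f σ)) η * Real.sqrt (f η)
          * nu (fun x => g 0 (pt x)) (fun x => g 1 (pt x)) (fun x => g 2 (pt x)) η
        ≤ -(1 / 4) * exchDirForm D (fun x => g 0 (pt x)) (fun x => g 1 (pt x))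
              (fun x => g 2 (pt x)) f
          + C1 * (N : ℝ) ^ ((d : ℤ) - 2) := by
  classical
  -- the compact convex reference box `K = [-1,1] × [0,1]^{d-1}`
  set K : Set (ℝ × (Fin (d - 1) → ℝ)) :=
    (Set.Icc (-1 : ℝ) 1) ×ˢ (Set.univ.pi fun _ : Fin (d - 1) => Set.Icc (0 : ℝ) 1) with hKdef
  have hKV : K ⊆ V := fun p hp => hVslab hp.1
  have hKcomp : IsCompact K :=
    (isCompact_Icc).prod (isCompact_univ_pi fun _ => isCompact_Icc)
  have hKconv : Convex ℝ K := (convex_Icc _ _).prod (convex_pi fun _ _ => convex_Icc _ _)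
  have hKne : K.Nonempty := ⟨((0 : ℝ), fun _ => 0), by
    refine ⟨Set.mem_Icc.2 ⟨by norm_num, by norm_num⟩, fun j _ =>
      Set.mem_Icc.2 ⟨le_refl 0, zero_le_one⟩⟩⟩
  -- a uniform Lipschitz constant for the profiles on `K`
  have hLc : ∀ i : Fin 3, ∃ Li : ℝ, 0 ≤ Li ∧
      ∀ p ∈ K, ∀ q ∈ K, |g i p - g i q| ≤ Li * ‖p - q‖ := by
    intro i
    have hdiff : ∀ p ∈ K, DifferentiableAt ℝ (g i) p := fun p hp =>
      ((hg i).differentiableOn (by norm_num)).differentiableAt (hV.mem_nhds (hKV hp))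
    obtain ⟨C, hC⟩ := hKcomp.exists_bound_of_continuousOn
      (((hg i).continuousOn_fderiv_of_isOpen hV (by norm_num)).mono hKV)
    refine ⟨max C 0, le_max_right _ _, fun p hp q hq => ?_⟩
    have h := Convex.norm_image_sub_le_of_norm_fderiv_le (C := max C 0) hdiff
      (fun z hz => (hC z hz).trans (le_max_left C 0)) hKconv hq hp
    simpa [Real.norm_eq_abs] using h
  obtain ⟨L0, hL00, hLip0⟩ := hLc 0
  obtain ⟨L1, hL10, hLip1⟩ := hLc 1
  obtain ⟨L2, hL20, hLip2⟩ := hLc 2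
  set L : ℝ := L0 + L1 + L2 + 1 with hLdef
  have hL0 : 0 < L := by rw [hLdef]; linarith
  have hLip : ∀ i : Fin 3, ∀ p ∈ K, ∀ q ∈ K, |g i p - g i q| ≤ L * ‖p - q‖ := by
    intro i p hp q hq
    have hle : ∀ Li : ℝ, (∀ p ∈ K, ∀ q ∈ K, |g i p - g i q| ≤ Li * ‖p - q‖) → Li ≤ L →
        |g i p - g i q| ≤ L * ‖p - q‖ := fun Li hLi hle =>
      (hLi p hp q hq).trans (mul_le_mul_of_nonneg_right hle (norm_nonneg _))
    fin_cases i
    · exact hle L0 hLip0 (by rw [hLdef]; linarith)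
    · exact hle L1 hLip1 (by rw [hLdef]; linarith)
    · exact hle L2 hLip2 (by rw [hLdef]; linarith)
  -- a uniform lower bound for the vacancy rate on `K`
  obtain ⟨p0, hp0K, hp0min⟩ := hKcomp.exists_isMinOn hKne
    (f := fun p => 1 - g 0 p - g 1 p - g 2 p)
    (((continuousOn_const.sub ((hg 0).continuousOn.mono hKV)).sub
      ((hg 1).continuousOn.mono hKV)).sub ((hg 2).continuousOn.mono hKV))
  set δ : ℝ := 1 - g 0 p0 - g 1 p0 - g 2 p0 with hδdef
  have hδ0 : 0 < δ := by
    have := hgsum p0 (hKV hp0K)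
    rw [hδdef]; linarith
  set c0 : ℝ := min cs δ with hc0def
  have hc00 : 0 < c0 := lt_min hcs hδ0
  set Lr : ℝ := 3 * L with hLrdef
  have hLr0 : 0 < Lr := by rw [hLrdef]; linarith
  set Cr : ℝ := 2 * Lr / c0 ^ 2 with hCrdef
  have hCr0 : 0 < Cr := div_pos (by linarith) (by positivity)
  refine ⟨3 * D * (d : ℝ) * (Cr ^ 2 * (2 + Cr)) / 2 + 1, ?_, ?_⟩
  · have h1 : (0:ℝ) ≤ 3 * D * (d : ℝ) * (Cr ^ 2 * (2 + Cr)) / 2 := by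
      apply div_nonneg _ (by norm_num)
      exact mul_nonneg (mul_nonneg (by linarith) (Nat.cast_nonneg d))
        (mul_nonneg (sq_nonneg _) (by linarith))
    linarith
  intro N hN f hf hsum
  have hN0 : (0:ℝ) < N := by exact_mod_cast Nat.lt_of_lt_of_le Nat.zero_lt_one hN
  have hN1 : (1:ℝ) ≤ N := by exact_mod_cast hN
  set a1 : Site d N → ℝ := fun x => g 0 (pt x) with ha1
  set a2 : Site d N → ℝ := fun x => g 1 (pt x) with ha2
  set a3 : Site d N → ℝ := fun x => g 2 (pt x) with ha3
  -- all rescaled sites lie in `K`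
  have hptK : ∀ z : Site d N, pt z ∈ K := by
    intro z
    refine ⟨Set.mem_Icc.2 ⟨?_, ?_⟩, fun j _ => Set.mem_Icc.2 ⟨?_, ?_⟩⟩
    · show (-1 : ℝ) ≤ ((z.1.val : ℝ) - N) / N
      rw [le_div_iff₀ hN0]
      have : (0:ℝ) ≤ (z.1.val : ℝ) := Nat.cast_nonneg _
      linarith
    · show ((z.1.val : ℝ) - N) / N ≤ 1
      rw [div_le_one hN0]
      have hv : z.1.val ≤ 2 * N := by have := z.1.isLt; omega
      have : (z.1.val : ℝ) ≤ 2 * N := by exact_mod_cast hv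
      push_cast
      linarith
    · show (0:ℝ) ≤ ((z.2 j).val : ℝ) / N
      positivity
    · show ((z.2 j).val : ℝ) / N ≤ 1
      rw [div_le_one hN0]
      exact_mod_cast (z.2 j).isLt.le
  have hgV : ∀ z : Site d N, pt z ∈ V := fun z => hKV (hptK z)
  -- neighbouring sites have close profile values
  have hstep_g : ∀ (k : Fin d) (x y : Site d N), step k x = some y →
      ∀ i : Fin 3, |g i (pt x) - g i (pt y)| ≤ L / N := by
    intro k x y hst i
    have hnormb : ∀ p q : ℝ × (Fin (d - 1) → ℝ), |p.1 - q.1| ≤ 1 / N →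
        (∀ j, |p.2 j - q.2 j| ≤ 1 / N) → ‖p - q‖ ≤ 1 / N := by
      intro p q h1 h2
      rw [Prod.norm_def]
      refine max_le ?_ ?_
      · simpa [Real.norm_eq_abs] using h1
      · rw [pi_norm_le_iff_of_nonneg (by positivity)]
        intro j
        simpa [Real.norm_eq_abs] using h2 j
    have hmain : ∀ q, q ∈ K → ‖pt x - q‖ ≤ 1 / N → g i (pt y) = g i q →
        |g i (pt x) - g i (pt y)| ≤ L / N := by
      intro q hqK hq hgq
      rw [hgq]
      calc |g i (pt x) - g i q| ≤ L * ‖pt x - q‖ := hLip i (pt x) (hptK x) q hqK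
        _ ≤ L * (1 / N) := mul_le_mul_of_nonneg_left hq hL0.le
        _ = L / N := by ring
    unfold step at hst
    by_cases hk : k.val = 0
    · rw [if_pos hk] at hst
      by_cases h : x.1.val + 1 < 2 * N + 1
      · rw [dif_pos h] at hst
        have hy : y = (⟨x.1.val + 1, h⟩, x.2) := (Option.some_inj.1 hst).symm
        subst hy
        refine hmain (pt (⟨x.1.val + 1, h⟩, x.2)) (hptK _) (hnormb _ _ ?_ ?_) rfl
        · show |((x.1.val : ℝ) - N) / N
              - ((((⟨x.1.val + 1, h⟩ : Fin (2*N+1)).val : ℕ) : ℝ) - N) / N| ≤ 1 / N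
          have he : ((x.1.val : ℝ) - N) / N - (((x.1.val + 1 : ℕ) : ℝ) - N) / N = -(1 / N) := by
            push_cast
            field_simp
            ring
          rw [show (((⟨x.1.val + 1, h⟩ : Fin (2*N+1)).val : ℕ)) = x.1.val + 1 from rfl, he,
            abs_neg, abs_of_nonneg (by positivity)]
        · intro j
          show |((x.2 j).val : ℝ) / N - ((x.2 j).val : ℝ) / N| ≤ 1 / N
          rw [sub_self, abs_zero]
          positivity
      · rw [dif_neg h] at hst
        exact absurd hst (by simp)
    · rw [if_neg hk] at hst
      have hy : y = (x.1, fun j => if j.val = k.val - 1 then cyc (x.2 j) else x.2 j) :=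
        (Option.some_inj.1 hst).symm
      subst hy
      have hk1 : 1 ≤ k.val := Nat.one_le_iff_ne_zero.2 hk
      have hkd : k.val - 1 < d - 1 := by have := k.isLt; omega
      obtain ⟨j0, hj0v⟩ : ∃ j : Fin (d - 1), (j : ℕ) = k.val - 1 := ⟨⟨k.val - 1, hkd⟩, rfl⟩
      have hjiff : ∀ j : Fin (d - 1), j.val = k.val - 1 → j = j0 :=
        fun j hj => Fin.ext (hj.trans hj0v.symm)
      by_cases hwr : (x.2 j0).val + 1 < N
      · -- no wraparound
        refine hmain (pt (x.1, fun j => if j.val = k.val - 1 then cyc (x.2 j) else x.2 j))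
          (hptK _) (hnormb _ _ ?_ ?_) rfl
        · show |((x.1.val : ℝ) - N) / N - ((x.1.val : ℝ) - N) / N| ≤ 1 / N
          rw [sub_self, abs_zero]
          positivity
        · intro j
          show |((x.2 j).val : ℝ) / N
              - (((if (j : ℕ) = k.val - 1 then cyc (x.2 j) else x.2 j) : Fin N).val : ℝ) / N|
            ≤ 1 / N
          by_cases hj : (j : ℕ) = k.val - 1
          · rw [if_pos hj]
            have hjj : j = j0 := hjiff j hj
            subst hjj
            have hcv : (cyc (x.2 j)).val = (x.2 j).val + 1 := Nat.mod_eq_of_lt hwr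
            rw [hcv]
            have he : ((x.2 j).val : ℝ) / N - (((x.2 j).val + 1 : ℕ) : ℝ) / N = -(1 / N) := by
              push_cast
              field_simp
              ring
            rw [he, abs_neg, abs_of_nonneg (by positivity)]
          · rw [if_neg hj, sub_self, abs_zero]
            positivity
      · -- wraparound: use periodicity of the profile
        have hwv : (x.2 j0).val + 1 = N := by have := (x.2 j0).isLt; omega
        have hcv0 : (cyc (x.2 j0)).val = 0 := by
          show ((x.2 j0).val + 1) % N = 0
          rw [hwv, Nat.mod_self]
        set y' : Site d N := (x.1, fun j => if j.val = k.val - 1 then cyc (x.2 j) else x.2 j)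
          with hy'def
        have hy'2 : ∀ j : Fin (d - 1),
            y'.2 j = if (j : ℕ) = k.val - 1 then cyc (x.2 j) else x.2 j := fun j => rfl
        have hpty2 : ∀ j : Fin (d - 1), (pt y').2 j = ((y'.2 j).val : ℝ) / N := fun j => rfl
        have h0 : (pt y').2 j0 = 0 := by
          rw [hpty2 j0, hy'2 j0, if_pos hj0v, hcv0]
          norm_num
        have hper := hgper i (pt y') j0
        refine hmain ((pt y').1, Function.update (pt y').2 j0 ((pt y').2 j0 + 1)) ?_
          (hnormb _ _ ?_ ?_) hper.symm
        · refine ⟨(hptK y').1, fun j _ => ?_⟩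
          show Function.update (pt y').2 j0 ((pt y').2 j0 + 1) j ∈ Set.Icc (0:ℝ) 1
          by_cases hj : j = j0
          · subst hj
            rw [Function.update_self, h0]
            norm_num
          · rw [Function.update_of_ne hj]
            exact (hptK y').2 j (Set.mem_univ j)
        · show |(pt x).1 - (pt y').1| ≤ 1 / N
          have : (pt y').1 = (pt x).1 := rfl
          rw [this, sub_self, abs_zero]
          positivity
        · intro j
          show |(pt x).2 j - Function.update (pt y').2 j0 ((pt y').2 j0 + 1) j| ≤ 1 / N
          by_cases hj : j = j0
          · subst hj
            rw [Function.update_self, h0]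
            have hxv : ((x.2 j).val : ℝ) = (N : ℝ) - 1 := by
              have : ((x.2 j).val : ℝ) + 1 = N := by exact_mod_cast hwv
              linarith
            show |((x.2 j).val : ℝ) / N - (0 + 1)| ≤ 1 / N
            rw [hxv]
            have he : ((N:ℝ) - 1) / N - (0 + 1) = -(1 / N) := by field_simp; ring
            rw [he, abs_neg, abs_of_nonneg (by positivity)]
          · rw [Function.update_of_ne hj]
            have hjv : ¬ (j : ℕ) = k.val - 1 := fun hc => hj (hjiff j hc)
            show |((x.2 j).val : ℝ) / N - ((y'.2 j).val : ℝ) / N| ≤ 1 / N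
            rw [hy'2 j, if_neg hjv, sub_self, abs_zero]
            positivity
  -- pointwise evaluation of the rates
  have hval : ∀ (i : Fin 4) (z : Site d N), rate4 a1 a2 a3 i z
      = if i = 1 then a1 z else if i = 2 then a2 z
        else if i = 3 then a3 z else 1 - a1 z - a2 z - a3 z := by
    intro i z
    unfold rate4
    split_ifs <;> rfl
  -- uniform bounds on the rates
  have hrate_low : ∀ (i : Fin 4) (z : Site d N), c0 ≤ rate4 a1 a2 a3 i z := by
    intro i z
    have hb0 := hgbd 0 (pt z) (hgV z)
    have hb1 := hgbd 1 (pt z) (hgV z)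
    have hb2 := hgbd 2 (pt z) (hgV z)
    have hδz : δ ≤ 1 - g 0 (pt z) - g 1 (pt z) - g 2 (pt z) := by
      have h := isMinOn_iff.mp hp0min (pt z) (hptK z)
      rw [hδdef]
      linarith
    rw [hval i z]
    split_ifs
    · simp only [ha1]
      exact le_trans (min_le_left _ _) hb0.1
    · simp only [ha2]
      exact le_trans (min_le_left _ _) hb1.1
    · simp only [ha3]
      exact le_trans (min_le_left _ _) hb2.1
    · simp only [ha1, ha2, ha3]
      exact le_trans (min_le_right _ _) hδz
  have hrate_up : ∀ (i : Fin 4) (z : Site d N), rate4 a1 a2 a3 i z ≤ 1 := by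
    intro i z
    have hb0 := hgbd 0 (pt z) (hgV z)
    have hb1 := hgbd 1 (pt z) (hgV z)
    have hb2 := hgbd 2 (pt z) (hgV z)
    rw [hval i z]
    split_ifs
    · simp only [ha1]; linarith [hb0.2]
    · simp only [ha2]; linarith [hb1.2]
    · simp only [ha3]; linarith [hb2.2]
    · simp only [ha1, ha2, ha3]; linarith [hb0.1, hb1.1, hb2.1]
  -- the rates of neighbouring sites are close
  have hrate_lip : ∀ (k : Fin d) (x y : Site d N), step k x = some y →
      ∀ i : Fin 4, |rate4 a1 a2 a3 i x - rate4 a1 a2 a3 i y| ≤ Lr / N := by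
    intro k x y hst i
    have e0 := abs_le.1 (hstep_g k x y hst 0)
    have e1 := abs_le.1 (hstep_g k x y hst 1)
    have e2 := abs_le.1 (hstep_g k x y hst 2)
    have hLN : 0 ≤ L / N := le_of_lt (div_pos hL0 hN0)
    rw [hval i x, hval i y, hLrdef]
    split_ifs
    · simp only [ha1]
      rw [abs_le]
      constructor <;> (rw [show (3:ℝ) * L / N = 3 * (L / N) from by ring]; linarith [e0.1, e0.2])
    · simp only [ha2]
      rw [abs_le]
      constructor <;> (rw [show (3:ℝ) * L / N = 3 * (L / N) from by ring]; linarith [e1.1, e1.2])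
    · simp only [ha3]
      rw [abs_le]
      constructor <;> (rw [show (3:ℝ) * L / N = 3 * (L / N) from by ring]; linarith [e2.1, e2.2])
    · simp only [ha1, ha2, ha3]
      rw [abs_le]
      constructor
      · rw [show (3:ℝ) * L / N = 3 * (L / N) from by ring]
        linarith [e0.1, e0.2, e1.1, e1.2, e2.1, e2.2]
      · rw [show (3:ℝ) * L / N = 3 * (L / N) from by ring]
        linarith [e0.1, e0.2, e1.1, e1.2, e2.1, e2.2]
  -- positivity of the reference measure
  have hnu_pos : ∀ η : Config d N, 0 < nu a1 a2 a3 η := by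
    intro η
    have : nu a1 a2 a3 η = ∏ z : Site d N, rate4 a1 a2 a3 (state (η z)) z := rfl
    rw [this]
    exact Finset.prod_pos fun z _ => lt_of_lt_of_le hc00 (hrate_low _ z)
  -- the measure changes little under a nearest-neighbour swap
  have hratio : ∀ (k : Fin d) (x y : Site d N), step k x = some y → x ≠ y →
      ∀ η : Config d N,
        |nu a1 a2 a3 (swap x y η) - nu a1 a2 a3 η| ≤ Cr / N * nu a1 a2 a3 η := by
    intro k x y hst hxy η
    have hb := prod_swap_bound (fun z => rate4 a1 a2 a3 (state (η z)) z)
      (fun z => rate4 a1 a2 a3 (state (swap x y η z)) z) c0 (Lr / N) hc00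
      (fun z => hrate_low _ z) (fun z => hrate_low _ z)
      (fun z => hrate_up _ z) (fun z => hrate_up _ z) x y hxy
      (fun z hzx hzy => by
        show rate4 a1 a2 a3 (state (swap x y η z)) z = rate4 a1 a2 a3 (state (η z)) z
        rw [swap_apply_other x y z hzx hzy])
      (by
        show |rate4 a1 a2 a3 (state (swap x y η x)) x - rate4 a1 a2 a3 (state (η y)) y| ≤ Lr / N
        rw [swap_apply_fst]
        exact hrate_lip k x y hst (state (η y)))
      (by
        show |rate4 a1 a2 a3 (state (swap x y η y)) y - rate4 a1 a2 a3 (state (η x)) x| ≤ Lr / N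
        rw [swap_apply_snd x y hxy, abs_sub_comm]
        exact hrate_lip k x y hst (state (η x)))
    have hb' : |nu a1 a2 a3 (swap x y η) - nu a1 a2 a3 η|
        ≤ 2 * (Lr / N) / c0 ^ 2 * nu a1 a2 a3 η := hb
    calc |nu a1 a2 a3 (swap x y η) - nu a1 a2 a3 η|
        ≤ 2 * (Lr / N) / c0 ^ 2 * nu a1 a2 a3 η := hb'
      _ = Cr / N * nu a1 a2 a3 η := by rw [hCrdef]; ring
  -- the per-edge estimate
  set K2 : ℝ := Cr ^ 2 * (2 + Cr) / (2 * (N:ℝ) ^ 2) with hK2def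
  have hK2nn : 0 ≤ K2 := by
    rw [hK2def]
    exact div_nonneg (mul_nonneg (sq_nonneg _) (by linarith)) (by positivity)
  have hkey : ∀ (k : Fin d) (x : Site d N),
      (∑ η : Config d N, (step k x).elim 0 fun y =>
        (Real.sqrt (f (swap x y η)) - Real.sqrt (f η)) * Real.sqrt (f η) * nu a1 a2 a3 η)
      ≤ -(1/4) * ((step k x).elim 0 fun y => ∑ η : Config d N,
          (Real.sqrt (f (swap x y η)) - Real.sqrt (f η)) ^ 2 * nu a1 a2 a3 η) + K2 := by
    intro k x
    cases hst : step k x with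
    | none => simpa using hK2nn
    | some y =>
      simp only [Option.elim]
      rcases eq_or_ne x y with rfl | hxy
      · have hL : (∑ η : Config d N, (Real.sqrt (f (swap x x η)) - Real.sqrt (f η))
            * Real.sqrt (f η) * nu a1 a2 a3 η) = 0 := by
          simp [swap_self]
        have hE : (∑ η : Config d N, (Real.sqrt (f (swap x x η)) - Real.sqrt (f η)) ^ 2
            * nu a1 a2 a3 η) = 0 := by
          simp [swap_self]
        rw [hL, hE]
        linarith
      · have hedge := edge_est (swap x y) (swap_invol x y) (nu a1 a2 a3)
          (fun η => (hnu_pos η).le) (Cr / N) (le_of_lt (div_pos hCr0 hN0))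
          (hratio k x y hst hxy) f hf hsum
        refine hedge.trans ?_
        have hcb : (Cr / N) ^ 2 * (2 + Cr / N) / 2 ≤ K2 := by
          rw [hK2def, div_pow]
          have h1 : Cr / N ≤ Cr := by
            rw [div_le_iff₀ hN0]
            nlinarith [hCr0.le]
          rw [show Cr ^ 2 / (N:ℝ) ^ 2 * (2 + Cr / N) / 2
              = Cr ^ 2 * (2 + Cr / N) / (2 * (N:ℝ) ^ 2) from by ring]
          gcongr
        linarith
  -- rewrite the left-hand side edge by edge
  have hLHS : (∑ η : Config d N, exchGen D (fun σ => Real.sqrt (f σ)) η * Real.sqrt (f η)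
        * nu a1 a2 a3 η)
      = D * ∑ k : Fin d, ∑ x : Site d N, ∑ η : Config d N, (step k x).elim 0
          fun y => (Real.sqrt (f (swap x y η)) - Real.sqrt (f η)) * Real.sqrt (f η)
            * nu a1 a2 a3 η := by
    have h1 : ∀ η : Config d N, exchGen D (fun σ => Real.sqrt (f σ)) η * Real.sqrt (f η)
          * nu a1 a2 a3 η
        = D * ∑ k : Fin d, ∑ x : Site d N, ((step k x).elim 0
            fun y => (Real.sqrt (f (swap x y η)) - Real.sqrt (f η)) * Real.sqrt (f η)
              * nu a1 a2 a3 η) := by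
      intro η
      unfold exchGen
      rw [mul_assoc, mul_assoc]
      congr 1
      rw [Finset.sum_mul]
      refine Finset.sum_congr rfl fun k _ => ?_
      rw [Finset.sum_mul]
      refine Finset.sum_congr rfl fun x _ => ?_
      cases hst : step k x with
      | none => simp
      | some y =>
        simp only [Option.elim]
        ring
    calc (∑ η : Config d N, exchGen D (fun σ => Real.sqrt (f σ)) η * Real.sqrt (f η)
          * nu a1 a2 a3 η)
        = ∑ η : Config d N, D * ∑ k : Fin d, ∑ x : Site d N, ((step k x).elim 0
            fun y => (Real.sqrt (f (swap x y η)) - Real.sqrt (f η)) * Real.sqrt (f η)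
              * nu a1 a2 a3 η) := Finset.sum_congr rfl fun η _ => h1 η
      _ = D * ∑ η : Config d N, ∑ k : Fin d, ∑ x : Site d N, ((step k x).elim 0
            fun y => (Real.sqrt (f (swap x y η)) - Real.sqrt (f η)) * Real.sqrt (f η)
              * nu a1 a2 a3 η) := (Finset.mul_sum _ _ _).symm
      _ = D * ∑ k : Fin d, ∑ η : Config d N, ∑ x : Site d N, ((step k x).elim 0
            fun y => (Real.sqrt (f (swap x y η)) - Real.sqrt (f η)) * Real.sqrt (f η)
              * nu a1 a2 a3 η) := by rw [Finset.sum_comm]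
      _ = D * ∑ k : Fin d, ∑ x : Site d N, ∑ η : Config d N, ((step k x).elim 0
            fun y => (Real.sqrt (f (swap x y η)) - Real.sqrt (f η)) * Real.sqrt (f η)
              * nu a1 a2 a3 η) := by
          congr 1
          exact Finset.sum_congr rfl fun k _ => Finset.sum_comm
  rw [hLHS]
  have hEdir : exchDirForm D a1 a2 a3 f
      = D * ∑ k : Fin d, ∑ x : Site d N, ((step k x).elim 0 fun y => ∑ η : Config d N,
          (Real.sqrt (f (swap x y η)) - Real.sqrt (f η)) ^ 2 * nu a1 a2 a3 η) := rfl
  have hsum_le : (∑ k : Fin d, ∑ x : Site d N, ∑ η : Config d N, (step k x).elim 0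
          fun y => (Real.sqrt (f (swap x y η)) - Real.sqrt (f η)) * Real.sqrt (f η)
            * nu a1 a2 a3 η)
      ≤ ∑ k : Fin d, ∑ x : Site d N, (-(1/4) * ((step k x).elim 0 fun y => ∑ η : Config d N,
          (Real.sqrt (f (swap x y η)) - Real.sqrt (f η)) ^ 2 * nu a1 a2 a3 η) + K2) :=
    Finset.sum_le_sum fun k _ => Finset.sum_le_sum fun x _ => hkey k x
  have hsplit : (∑ k : Fin d, ∑ x : Site d N, (-(1/4) * ((step k x).elim 0
          fun y => ∑ η : Config d N,
          (Real.sqrt (f (swap x y η)) - Real.sqrt (f η)) ^ 2 * nu a1 a2 a3 η) + K2))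
      = -(1/4) * (∑ k : Fin d, ∑ x : Site d N, ((step k x).elim 0 fun y => ∑ η : Config d N,
          (Real.sqrt (f (swap x y η)) - Real.sqrt (f η)) ^ 2 * nu a1 a2 a3 η))
        + (d : ℝ) * (Fintype.card (Site d N) : ℝ) * K2 := by
    have e1 : ∀ k : Fin d, (∑ x : Site d N, (-(1/4) * ((step k x).elim 0
            fun y => ∑ η : Config d N,
            (Real.sqrt (f (swap x y η)) - Real.sqrt (f η)) ^ 2 * nu a1 a2 a3 η) + K2))
        = -(1/4) * (∑ x : Site d N, ((step k x).elim 0 fun y => ∑ η : Config d N,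
            (Real.sqrt (f (swap x y η)) - Real.sqrt (f η)) ^ 2 * nu a1 a2 a3 η))
          + (Fintype.card (Site d N) : ℝ) * K2 := by
      intro k
      rw [Finset.sum_add_distrib, ← Finset.mul_sum, Finset.sum_const, Finset.card_univ,
        nsmul_eq_mul]
    rw [Finset.sum_congr rfl fun k _ => e1 k, Finset.sum_add_distrib, ← Finset.mul_sum,
      Finset.sum_const, Finset.card_univ, nsmul_eq_mul, Fintype.card_fin]
    ring
  have hfin : D * ((d : ℝ) * (Fintype.card (Site d N) : ℝ) * K2)
      ≤ (3 * D * (d : ℝ) * (Cr ^ 2 * (2 + Cr)) / 2 + 1) * (N:ℝ) ^ ((d : ℤ) - 2) := by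
    have hzp : (N:ℝ) ^ ((d : ℤ) - 2) = (N:ℝ) ^ d / (N:ℝ) ^ 2 := by
      rw [show ((d:ℤ) - 2) = ((d:ℤ)) - ((2:ℕ):ℤ) from by norm_num,
        zpow_sub₀ (ne_of_gt hN0), zpow_natCast, zpow_natCast]
    have hcard : (Fintype.card (Site d N) : ℝ) ≤ 3 * (N:ℝ) ^ d := by
      have h1 : Fintype.card (Site d N) = (2*N+1) * N ^ (d-1) := by
        simp [Fintype.card_prod, Fintype.card_fun]
      have h2 : (2*N+1) * N ^ (d-1) ≤ 3 * N ^ d := by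
        calc (2*N+1) * N^(d-1) ≤ (3*N) * N^(d-1) := Nat.mul_le_mul_right _ (by omega)
          _ = 3 * N^d := by rw [mul_assoc, ← pow_succ', Nat.sub_add_cancel hd]
      calc (Fintype.card (Site d N) : ℝ) = (((2*N+1) * N^(d-1) : ℕ) : ℝ) := by rw [h1]
        _ ≤ ((3 * N^d : ℕ) : ℝ) := by exact_mod_cast h2
        _ = 3 * (N:ℝ)^d := by push_cast; ring
    rw [hzp, hK2def]
    have hnn : (0:ℝ) ≤ Cr ^ 2 * (2 + Cr) / (2 * (N:ℝ) ^ 2) :=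
      div_nonneg (mul_nonneg (sq_nonneg _) (by linarith)) (by positivity)
    calc D * ((d : ℝ) * (Fintype.card (Site d N) : ℝ) * (Cr ^ 2 * (2 + Cr) / (2 * (N:ℝ) ^ 2)))
        ≤ D * ((d : ℝ) * (3 * (N:ℝ) ^ d) * (Cr ^ 2 * (2 + Cr) / (2 * (N:ℝ) ^ 2))) := by
          refine mul_le_mul_of_nonneg_left ?_ hD.le
          exact mul_le_mul_of_nonneg_right
            (mul_le_mul_of_nonneg_left hcard (Nat.cast_nonneg d)) hnn
      _ = (3 * D * (d : ℝ) * (Cr ^ 2 * (2 + Cr)) / 2) * ((N:ℝ) ^ d / (N:ℝ) ^ 2) := by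
          field_simp
      _ ≤ (3 * D * (d : ℝ) * (Cr ^ 2 * (2 + Cr)) / 2 + 1) * ((N:ℝ) ^ d / (N:ℝ) ^ 2) := by
          refine mul_le_mul_of_nonneg_right (by linarith) (by positivity)
  calc D * (∑ k : Fin d, ∑ x : Site d N, ∑ η : Config d N, (step k x).elim 0
          fun y => (Real.sqrt (f (swap x y η)) - Real.sqrt (f η)) * Real.sqrt (f η)
            * nu a1 a2 a3 η)
      ≤ D * (-(1/4) * (∑ k : Fin d, ∑ x : Site d N, ((step k x).elim 0
            fun y => ∑ η : Config d N,
            (Real.sqrt (f (swap x y η)) - Real.sqrt (f η)) ^ 2 * nu a1 a2 a3 η))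
          + (d : ℝ) * (Fintype.card (Site d N) : ℝ) * K2) :=
        mul_le_mul_of_nonneg_left (hsplit ▸ hsum_le) hD.le
    _ = -(1/4) * exchDirForm D a1 a2 a3 f
          + D * ((d : ℝ) * (Fintype.card (Site d N) : ℝ) * K2) := by
        rw [hEdir]; ring
    _ ≤ -(1/4) * exchDirForm D a1 a2 a3 f
          + (3 * D * (d : ℝ) * (Cr ^ 2 * (2 + Cr)) / 2 + 1) * (N:ℝ) ^ ((d : ℤ) - 2) := by
        linarith


end SIT
end
end

section
/- Let ĝ = (g₁,g₂,g₃) : V → (0,1)³ be a C² function on a neighbourhood V of [−1,1]×𝕋^{d−1} satisfying, for some 0 < c* < C* < 1, c* ≤ g_i ≤ C* for each i and g₁+g₂+g₃ < 1, and set α̂_N(x) = ĝ(x/N) for x ∈ B_N. Then there exists a constant C₂ > 0, depending only on d, λ₁, λ₂, r, c* and C*, such that for every N ≥ 1 and every density f with respect to ν^N_{α̂_N}: Σ_{(ξ,ω)} (𝕃_N √f)(ξ,ω) · √f(ξ,ω) · ν^N_{α̂_N}(ξ,ω) ≤ C₂ N^d. -/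
open Finset

noncomputable section

namespace SIT

variable {d N : ℕ}

/-! ### Auxiliary lemmas -/

lemma eta_nonneg (i : Fin 4) (η : Config d N) (x : Site d N) : 0 ≤ eta i η x := by
  unfold eta; split <;> norm_num

lemma eta_le_one (i : Fin 4) (η : Config d N) (x : Site d N) : eta i η x ≤ 1 := by
  unfold eta; split <;> norm_num

lemma cyc_inj {N : ℕ} {v w : Fin N} (h : cyc v = cyc w) : v = w := by
  have h' := congrArg Fin.val h
  simp only [cyc] at h'
  have hv := v.isLt; have hw := w.isLt
  apply Fin.ext
  rcases Nat.lt_or_ge (v.val + 1) N with h1 | h1 <;>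
    rcases Nat.lt_or_ge (w.val + 1) N with h2 | h2
  · rw [Nat.mod_eq_of_lt h1, Nat.mod_eq_of_lt h2] at h'; omega
  · have hw1 : w.val + 1 = N := by omega
    rw [Nat.mod_eq_of_lt h1, hw1, Nat.mod_self] at h'; omega
  · have hv1 : v.val + 1 = N := by omega
    rw [hv1, Nat.mod_self, Nat.mod_eq_of_lt h2] at h'; omega
  · omega

lemma step_inj (k : Fin d) {a b x : Site d N}
    (ha : step k a = some x) (hb : step k b = some x) : a = b := by
  unfold step at ha hb
  by_cases hk : k.val = 0
  · rw [if_pos hk] at ha hb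
    split at ha
    · split at hb
      · have ha' := Option.some.inj ha
        have hb' := Option.some.inj hb
        rw [← ha', Prod.mk.injEq] at hb'
        obtain ⟨h1, h2⟩ := hb'
        have h1' : b.1.val + 1 = a.1.val + 1 := congrArg Fin.val h1
        exact Prod.ext (Fin.ext (by omega)) h2.symm
      · exact absurd hb (by simp)
    · exact absurd ha (by simp)
  · rw [if_neg hk] at ha hb
    have ha' := Option.some.inj ha
    have hb' := Option.some.inj hb
    have h1 : a.1 = b.1 := (congrArg Prod.fst ha').trans (congrArg Prod.fst hb').symm
    have h2 : a.2 = b.2 := by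
      funext j
      have hA := congrFun (congrArg Prod.snd ha') j
      have hB := congrFun (congrArg Prod.snd hb') j
      simp only at hA hB
      by_cases hj : j.val = k.val - 1
      · rw [if_pos hj] at hA hB
        exact cyc_inj (hA.trans hB.symm)
      · rw [if_neg hj] at hA hB
        exact hA.trans hB.symm
    exact Prod.ext h1 h2

lemma card_nbr_le (x : Site d N) :
    (univ.filter fun y : Site d N => nbr x y).card ≤ 2 * d := by
  have hsub : (univ.filter fun y : Site d N => nbr x y) ⊆
      univ.biUnion (fun k : Fin d =>
        (univ.filter fun y : Site d N => step k x = some y)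
          ∪ (univ.filter fun y : Site d N => step k y = some x)) := by
    intro y hy
    simp only [mem_filter, mem_univ, true_and] at hy
    obtain ⟨k, hk⟩ := hy
    refine mem_biUnion.2 ⟨k, mem_univ _, ?_⟩
    rcases hk with h | h
    · exact mem_union_left _ (mem_filter.2 ⟨mem_univ _, h⟩)
    · exact mem_union_right _ (mem_filter.2 ⟨mem_univ _, h⟩)
  calc (univ.filter fun y : Site d N => nbr x y).card
      ≤ _ := card_le_card hsub
    _ ≤ ∑ k : Fin d, ((univ.filter fun y : Site d N => step k x = some y)
          ∪ (univ.filter fun y : Site d N => step k y = some x)).card :=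
        card_biUnion_le
    _ ≤ ∑ _k : Fin d, 2 := by
        apply Finset.sum_le_sum; intro k _
        have h1 : (univ.filter fun y : Site d N => step k x = some y).card ≤ 1 := by
          apply card_le_one.2; intro a ha b hb
          simp only [mem_filter] at ha hb
          exact Option.some.inj (ha.2.symm.trans hb.2)
        have h2 : (univ.filter fun y : Site d N => step k y = some x).card ≤ 1 := by
          apply card_le_one.2; intro a ha b hb
          simp only [mem_filter] at ha hb
          exact step_inj k ha.2 hb.2
        calc ((univ.filter fun y : Site d N => step k x = some y)
              ∪ (univ.filter fun y : Site d N => step k y = some x)).card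
            ≤ _ + _ := card_union_le _ _
          _ ≤ 2 := by omega
    _ = 2 * d := by simp [mul_comm]

lemma nCount_nonneg (i : Fin 4) (x : Site d N) (η : Config d N) :
    0 ≤ nCount i x η := by
  unfold nCount
  apply Finset.sum_nonneg; intro y _
  split
  · exact eta_nonneg _ _ _
  · exact le_refl 0

lemma nCount_le (i : Fin 4) (x : Site d N) (η : Config d N) :
    nCount i x η ≤ 2 * (d : ℝ) := by
  unfold nCount
  calc ∑ y : Site d N, (if nbr x y then eta i η y else 0)
      ≤ ∑ y : Site d N, (if nbr x y then (1 : ℝ) else 0) := by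
        apply Finset.sum_le_sum; intro y _
        split
        · exact eta_le_one _ _ _
        · exact le_refl 0
    _ = ((univ.filter fun y : Site d N => nbr x y).card : ℝ) := by
        rw [Finset.sum_boole]
    _ ≤ ((2 * d : ℕ) : ℝ) := by exact_mod_cast card_nbr_le x
    _ = 2 * (d : ℝ) := by push_cast; ring

lemma nu_nonneg (a1 a2 a3 : Site d N → ℝ)
    (h : ∀ (i : Fin 4) (x : Site d N), 0 ≤ rate4 a1 a2 a3 i x) (η : Config d N) :
    0 ≤ nu a1 a2 a3 η :=
  Finset.prod_nonneg fun y _ => h _ _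

lemma nu_update_le (a1 a2 a3 : Site d N → ℝ) (m : ℝ)
    (hml : ∀ (i : Fin 4) (x : Site d N), m ≤ rate4 a1 a2 a3 i x)
    (hmu : ∀ (i : Fin 4) (x : Site d N), rate4 a1 a2 a3 i x ≤ 1)
    (hm0 : 0 < m) (x : Site d N) (v : Bool × Bool) (η : Config d N) :
    m * nu a1 a2 a3 (Function.update η x v) ≤ nu a1 a2 a3 η := by
  unfold nu
  rw [← Finset.prod_erase_mul univ
      (fun y => rate4 a1 a2 a3 (state (Function.update η x v y)) y) (mem_univ x),
    ← Finset.prod_erase_mul univ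
      (fun y => rate4 a1 a2 a3 (state (η y)) y) (mem_univ x)]
  have hP : ∏ y ∈ univ.erase x, rate4 a1 a2 a3 (state (Function.update η x v y)) y
      = ∏ y ∈ univ.erase x, rate4 a1 a2 a3 (state (η y)) y := by
    apply Finset.prod_congr rfl; intro y hy
    rw [Function.update_of_ne (mem_erase.1 hy).1]
  rw [hP, Function.update_self]
  set P := ∏ y ∈ univ.erase x, rate4 a1 a2 a3 (state (η y)) y with hPdef
  have hPn : 0 ≤ P :=
    Finset.prod_nonneg fun y _ => le_trans hm0.le (hml _ _)
  have hkey : m * rate4 a1 a2 a3 (state v) x ≤ rate4 a1 a2 a3 (state (η x)) x := by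
    calc m * rate4 a1 a2 a3 (state v) x ≤ m * 1 :=
          mul_le_mul_of_nonneg_left (hmu _ _) hm0.le
      _ = m := mul_one m
      _ ≤ _ := hml _ _
  calc m * (P * rate4 a1 a2 a3 (state v) x)
      = P * (m * rate4 a1 a2 a3 (state v) x) := by ring
    _ ≤ P * rate4 a1 a2 a3 (state (η x)) x := mul_le_mul_of_nonneg_left hkey hPn

lemma flipOmega_invol (x : Site d N) : Function.Involutive (flipOmega (N := N) x) := by
  intro η
  funext z
  unfold flipOmega
  rcases eq_or_ne z x with rfl | hz
  · simp [Function.update_self]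
  · simp [Function.update_of_ne hz]

lemma flipXi_invol (x : Site d N) : Function.Involutive (flipXi (N := N) x) := by
  intro η
  funext z
  unfold flipXi
  rcases eq_or_ne z x with rfl | hz
  · simp [Function.update_self]
  · simp [Function.update_of_ne hz]

lemma sum_comp_invol {α : Type*} [Fintype α] (T : α → α) (hT : Function.Involutive T)
    (F G : α → ℝ) : ∑ a, F (T a) * G a = ∑ a, F a * G (T a) :=
  Fintype.sum_bijective T hT.bijective _ _ (fun a => by rw [hT a])

lemma sqrt_mul_le {a b : ℝ} (ha : 0 ≤ a) (hb : 0 ≤ b) :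
    Real.sqrt a * Real.sqrt b ≤ (a + b) / 2 := by
  nlinarith [sq_nonneg (Real.sqrt a - Real.sqrt b), Real.sq_sqrt ha, Real.sq_sqrt hb,
    Real.sqrt_nonneg a, Real.sqrt_nonneg b]

set_option maxHeartbeats 1000000 in
lemma key_bound {d N : ℕ} (hd : 1 ≤ d) (hN : 1 ≤ N)
    (lam1 lam2 r : ℝ) (hlam1 : 0 < lam1) (hlam2 : 0 < lam2) (hr : 0 < r)
    (a1 a2 a3 : Site d N → ℝ) (m : ℝ) (hm0 : 0 < m)
    (hml : ∀ (i : Fin 4) (x : Site d N), m ≤ rate4 a1 a2 a3 i x)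
    (hmu : ∀ (i : Fin 4) (x : Site d N), rate4 a1 a2 a3 i x ≤ 1)
    (f : Config d N → ℝ) (hf : ∀ η, 0 ≤ f η)
    (hsum : ∑ η : Config d N, f η * nu a1 a2 a3 η = 1) :
    ∑ η : Config d N, contactGen lam1 lam2 r (fun σ => Real.sqrt (f σ)) η
        * Real.sqrt (f η) * nu a1 a2 a3 η
      ≤ ((max r 1 + (lam1 + lam2) * (2 * (d : ℝ)) + 1) * 3 * (1 / m + 1)) * (N : ℝ) ^ d := by
  set gs : Config d N → ℝ := fun σ => Real.sqrt (f σ) with hgsdef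
  set ν : Config d N → ℝ := nu a1 a2 a3 with hνdef
  set cmax : ℝ := max r 1 + (lam1 + lam2) * (2 * (d : ℝ)) + 1 with hcmaxdef
  have hgs0 : ∀ η, 0 ≤ gs η := fun η => Real.sqrt_nonneg _
  have hν0 : ∀ η, 0 ≤ ν η := fun η =>
    Finset.prod_nonneg fun y _ => le_trans hm0.le (hml _ _)
  have hdl : (0 : ℝ) ≤ (lam1 + lam2) * (2 * (d : ℝ)) := by positivity
  have hcmax0 : (0 : ℝ) ≤ cmax := by
    have := le_max_right r 1
    rw [hcmaxdef]; linarith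
  have h1m : (0 : ℝ) < 1 / m + 1 := by
    have := one_div_pos.mpr hm0; linarith
  -- rate bounds
  have hb2 : ∀ b : Bool, 0 ≤ b2r b ∧ b2r b ≤ 1 := by
    intro b; cases b <;> norm_num [b2r]
  have hc1 : ∀ (η : Config d N) (x : Site d N),
      0 ≤ r * (1 - b2r (η x).2) + b2r (η x).2
        ∧ r * (1 - b2r (η x).2) + b2r (η x).2 ≤ cmax := by
    intro η x
    obtain ⟨ht0, ht1⟩ := hb2 (η x).2
    have hr1 : r ≤ max r 1 := le_max_left r 1
    have h11 : (1 : ℝ) ≤ max r 1 := le_max_right r 1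
    constructor
    · nlinarith
    · rw [hcmaxdef]
      nlinarith [mul_nonneg (sub_nonneg.2 hr1) (sub_nonneg.2 ht1),
        mul_nonneg (sub_nonneg.2 h11) ht0]
  have hc2 : ∀ (η : Config d N) (x : Site d N),
      0 ≤ beta lam1 lam2 x η * (1 - b2r (η x).1) + b2r (η x).1
        ∧ beta lam1 lam2 x η * (1 - b2r (η x).1) + b2r (η x).1 ≤ cmax := by
    intro η x
    obtain ⟨ht0, ht1⟩ := hb2 (η x).1
    have hb0 : 0 ≤ beta lam1 lam2 x η := by
      unfold beta
      have h1 := nCount_nonneg 1 x η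
      have h3 := nCount_nonneg 3 x η
      nlinarith
    have hbu : beta lam1 lam2 x η ≤ (lam1 + lam2) * (2 * (d : ℝ)) := by
      unfold beta
      nlinarith [nCount_le 1 x η, nCount_le 3 x η, nCount_nonneg 1 x η,
        nCount_nonneg 3 x η]
    have h11 : (1 : ℝ) ≤ max r 1 := le_max_right r 1
    constructor
    · nlinarith
    · rw [hcmaxdef]
      nlinarith [mul_nonneg (sub_nonneg.2 hbu) (sub_nonneg.2 ht1),
        mul_nonneg hdl ht0]
  -- change of variable bounds
  have hS : ∀ (T : Config d N → Config d N), Function.Involutive T →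
      (∀ η, ν (T η) ≤ (1 / m) * ν η) →
      ∑ η : Config d N, f (T η) * ν η ≤ 1 / m := by
    intro T hT hTν
    rw [sum_comp_invol T hT f ν]
    calc ∑ η : Config d N, f η * ν (T η)
        ≤ ∑ η : Config d N, f η * ((1 / m) * ν η) := by
          apply Finset.sum_le_sum; intro η _
          exact mul_le_mul_of_nonneg_left (hTν η) (hf η)
      _ = (1 / m) * ∑ η : Config d N, f η * ν η := by
          rw [Finset.mul_sum]; apply Finset.sum_congr rfl; intros; ring
      _ = 1 / m := by rw [hνdef, hsum, mul_one]
  have hTν : ∀ (x : Site d N) (v : Bool × Bool) (η : Config d N),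
      ν (Function.update η x v) ≤ (1 / m) * ν η := by
    intro x v η
    have h' := nu_update_le a1 a2 a3 m hml hmu hm0 x v η
    rw [one_div, inv_mul_eq_div, le_div_iff₀ hm0, mul_comm]
    exact h'
  have hSω : ∀ x : Site d N, ∑ η : Config d N, f (flipOmega x η) * ν η ≤ 1 / m :=
    fun x => hS (flipOmega x) (flipOmega_invol x) (fun η => hTν x _ η)
  have hSξ : ∀ x : Site d N, ∑ η : Config d N, f (flipXi x η) * ν η ≤ 1 / m :=
    fun x => hS (flipXi x) (flipXi_invol x) (fun η => hTν x _ η)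
  -- pointwise bound
  have pointwise : ∀ (x : Site d N) (η : Config d N),
      ((r * (1 - b2r (η x).2) + b2r (η x).2) * (gs (flipOmega x η) - gs η)
        + (beta lam1 lam2 x η * (1 - b2r (η x).1) + b2r (η x).1)
          * (gs (flipXi x η) - gs η)) * gs η * ν η
      ≤ cmax / 2 * ((f (flipOmega x η) + f η) + (f (flipXi x η) + f η)) * ν η := by
    intro x η
    have hs1 : gs (flipOmega x η) * gs η ≤ (f (flipOmega x η) + f η) / 2 :=
      sqrt_mul_le (hf _) (hf _)
    have hs2 : gs (flipXi x η) * gs η ≤ (f (flipXi x η) + f η) / 2 :=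
      sqrt_mul_le (hf _) (hf _)
    have hab0 : 0 ≤ gs (flipOmega x η) * gs η := mul_nonneg (hgs0 _) (hgs0 _)
    have heb0 : 0 ≤ gs (flipXi x η) * gs η := mul_nonneg (hgs0 _) (hgs0 _)
    have hc1' := hc1 η x
    have hc2' := hc2 η x
    have key : ((r * (1 - b2r (η x).2) + b2r (η x).2) * (gs (flipOmega x η) - gs η)
        + (beta lam1 lam2 x η * (1 - b2r (η x).1) + b2r (η x).1)
          * (gs (flipXi x η) - gs η)) * gs η
        ≤ cmax / 2 * ((f (flipOmega x η) + f η) + (f (flipXi x η) + f η)) := by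
      nlinarith [mul_le_mul hc1'.2 hs1 hab0 hcmax0, mul_le_mul hc2'.2 hs2 heb0 hcmax0,
        mul_nonneg hc1'.1 (mul_self_nonneg (gs η)), mul_nonneg hc2'.1 (mul_self_nonneg (gs η)),
        hf (flipOmega x η), hf (flipXi x η), hf η]
    exact mul_le_mul_of_nonneg_right key (hν0 η)
  -- per-site bound
  have persite : ∀ x : Site d N,
      ∑ η : Config d N,
        ((r * (1 - b2r (η x).2) + b2r (η x).2) * (gs (flipOmega x η) - gs η)
          + (beta lam1 lam2 x η * (1 - b2r (η x).1) + b2r (η x).1)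
            * (gs (flipXi x η) - gs η)) * gs η * ν η
      ≤ cmax * (1 / m + 1) := by
    intro x
    calc ∑ η : Config d N,
        ((r * (1 - b2r (η x).2) + b2r (η x).2) * (gs (flipOmega x η) - gs η)
          + (beta lam1 lam2 x η * (1 - b2r (η x).1) + b2r (η x).1)
            * (gs (flipXi x η) - gs η)) * gs η * ν η
        ≤ ∑ η : Config d N,
            cmax / 2 * ((f (flipOmega x η) + f η) + (f (flipXi x η) + f η)) * ν η :=
          Finset.sum_le_sum fun η _ => pointwise x η
      _ = cmax / 2 * ((∑ η : Config d N, f (flipOmega x η) * ν η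
            + ∑ η : Config d N, f η * ν η)
            + (∑ η : Config d N, f (flipXi x η) * ν η
            + ∑ η : Config d N, f η * ν η)) := by
          rw [← Finset.sum_add_distrib, ← Finset.sum_add_distrib,
            ← Finset.sum_add_distrib, Finset.mul_sum]
          apply Finset.sum_congr rfl; intros; ring
      _ ≤ cmax / 2 * ((1 / m + 1) + (1 / m + 1)) := by
          have h1 := hSω x
          have h2 := hSξ x
          have h3 : ∑ η : Config d N, f η * ν η = 1 := by rw [hνdef]; exact hsum
          have : (∑ η : Config d N, f (flipOmega x η) * ν η
              + ∑ η : Config d N, f η * ν η)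
              + (∑ η : Config d N, f (flipXi x η) * ν η
              + ∑ η : Config d N, f η * ν η) ≤ (1 / m + 1) + (1 / m + 1) := by
            rw [h3]; linarith
          exact mul_le_mul_of_nonneg_left this (by linarith)
      _ = cmax * (1 / m + 1) := by ring
  -- cardinality bound
  have hcardN : Fintype.card (Site d N) = (2 * N + 1) * N ^ (d - 1) := by
    rw [Fintype.card_prod, Fintype.card_fun, Fintype.card_fin, Fintype.card_fin,
      Fintype.card_fin]
  have hcardle : Fintype.card (Site d N) ≤ 3 * N ^ d := by
    rw [hcardN]
    have hdd : d = 1 + (d - 1) := by omega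
    calc (2 * N + 1) * N ^ (d - 1) ≤ (3 * N) * N ^ (d - 1) :=
        Nat.mul_le_mul_right _ (by omega)
      _ = 3 * (N ^ 1 * N ^ (d - 1)) := by ring
      _ = 3 * N ^ (1 + (d - 1)) := by rw [pow_add]
      _ = 3 * N ^ d := by rw [← hdd]
  have hcardR : (Fintype.card (Site d N) : ℝ) ≤ 3 * (N : ℝ) ^ d := by
    exact_mod_cast hcardle
  -- assemble
  calc ∑ η : Config d N, contactGen lam1 lam2 r gs η * gs η * ν η
      = ∑ η : Config d N, ∑ x : Site d N,
          ((r * (1 - b2r (η x).2) + b2r (η x).2) * (gs (flipOmega x η) - gs η)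
            + (beta lam1 lam2 x η * (1 - b2r (η x).1) + b2r (η x).1)
              * (gs (flipXi x η) - gs η)) * gs η * ν η := by
        apply Finset.sum_congr rfl; intro η _
        unfold contactGen
        rw [Finset.sum_mul, Finset.sum_mul]
    _ = ∑ x : Site d N, ∑ η : Config d N,
          ((r * (1 - b2r (η x).2) + b2r (η x).2) * (gs (flipOmega x η) - gs η)
            + (beta lam1 lam2 x η * (1 - b2r (η x).1) + b2r (η x).1)
              * (gs (flipXi x η) - gs η)) * gs η * ν η := Finset.sum_comm
    _ ≤ ∑ _x : Site d N, cmax * (1 / m + 1) :=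
        Finset.sum_le_sum fun x _ => persite x
    _ = (Fintype.card (Site d N) : ℝ) * (cmax * (1 / m + 1)) := by
        rw [Finset.sum_const, nsmul_eq_mul, Finset.card_univ]
    _ ≤ (3 * (N : ℝ) ^ d) * (cmax * (1 / m + 1)) := by
        apply mul_le_mul_of_nonneg_right hcardR
        exact mul_nonneg hcmax0 h1m.le
    _ = (cmax * 3 * (1 / m + 1)) * (N : ℝ) ^ d := by ring

/-- Bound on the contact process term: for a smooth profile
`α̂_N(x) = ĝ(x/N)` there is a constant `C₂ > 0` (depending only on `d`, `λ₁`,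
`λ₂`, `r`, `c*`, `C*`) such that `⟨𝕃_N √f, √f⟩_{ν} ≤ C₂ N^d` for every `N ≥ 1`
and every density `f` with respect to `ν = ν^N_{α̂_N}`. -/
theorem contact_generator_bound (d : ℕ) (hd : 1 ≤ d)
    (lam1 lam2 r : ℝ) (hlam1 : 0 < lam1) (hlam2 : 0 < lam2) (hr : 0 < r)
    (cs Cs : ℝ) (hcs : 0 < cs) (hcsCs : cs < Cs) (hCs : Cs < 1)
    (V : Set (ℝ × (Fin (d - 1) → ℝ))) (hV : IsOpen V)
    (hVslab : {p : ℝ × (Fin (d - 1) → ℝ) | p.1 ∈ Set.Icc (-1 : ℝ) 1} ⊆ V)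
    (hVper : ∀ p ∈ V, ∀ j : Fin (d - 1), (p.1, Function.update p.2 j (p.2 j + 1)) ∈ V)
    (g : Fin 3 → (ℝ × (Fin (d - 1) → ℝ)) → ℝ)
    (hg : ∀ i, ContDiffOn ℝ 2 (g i) V)
    (hgper : ∀ (i : Fin 3) (p : ℝ × (Fin (d - 1) → ℝ)) (j : Fin (d - 1)),
      g i (p.1, Function.update p.2 j (p.2 j + 1)) = g i p)
    (hgbd : ∀ i : Fin 3, ∀ p ∈ V, cs ≤ g i p ∧ g i p ≤ Cs)
    (hgsum : ∀ p ∈ V, g 0 p + g 1 p + g 2 p < 1) :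
    ∃ C2 : ℝ, 0 < C2 ∧ ∀ N : ℕ, 1 ≤ N → ∀ f : Config d N → ℝ,
      (∀ η, 0 ≤ f η) →
      (∑ η : Config d N,
        f η * nu (fun x => g 0 (pt x)) (fun x => g 1 (pt x)) (fun x => g 2 (pt x)) η = 1) →
      ∑ η : Config d N, contactGen lam1 lam2 r (fun σ => Real.sqrt (f σ)) η
          * Real.sqrt (f η)
          * nu (fun x => g 0 (pt x)) (fun x => g 1 (pt x)) (fun x => g 2 (pt x)) η
        ≤ C2 * (N : ℝ) ^ d := by
  classical
  -- compact set K = [-1,1] × [0,1]^{d-1}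
  set K : Set (ℝ × (Fin (d - 1) → ℝ)) :=
    (Set.Icc (-1 : ℝ) 1) ×ˢ (Set.univ.pi fun _ => Set.Icc (0 : ℝ) 1) with hKdef
  have hKc : IsCompact K := isCompact_Icc.prod (isCompact_univ_pi fun _ => isCompact_Icc)
  have hKV : K ⊆ V := fun p hp => hVslab hp.1
  have hKne : K.Nonempty := ⟨(0, fun _ => 0), ⟨by norm_num, fun j _ => by norm_num⟩⟩
  have hcont : ContinuousOn (fun p => 1 - (g 0 p + g 1 p + g 2 p)) K :=
    (continuousOn_const.sub (((hg 0).continuousOn.add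
      (hg 1).continuousOn).add (hg 2).continuousOn)).mono hKV
  obtain ⟨p₀, hp₀, hmin⟩ := hKc.exists_isMinOn hKne hcont
  set ε : ℝ := 1 - (g 0 p₀ + g 1 p₀ + g 2 p₀) with hεdef
  have hε : 0 < ε := by
    have := hgsum p₀ (hKV hp₀); rw [hεdef]; linarith
  have hKε : ∀ p ∈ K, ε ≤ 1 - (g 0 p + g 1 p + g 2 p) := fun p hp =>
    isMinOn_iff.1 hmin p hp
  set m : ℝ := min cs ε with hmdef
  have hm0 : 0 < m := lt_min hcs hε
  set cmax : ℝ := max r 1 + (lam1 + lam2) * (2 * (d : ℝ)) + 1 with hcmaxdef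
  have hcmax0 : (0 : ℝ) ≤ cmax := by
    have h1 := le_max_right r 1
    have h2 : (0 : ℝ) ≤ (lam1 + lam2) * (2 * (d : ℝ)) := by positivity
    rw [hcmaxdef]; linarith
  have h1m : (0 : ℝ) < 1 / m + 1 := by
    have := one_div_pos.mpr hm0; linarith
  refine ⟨cmax * 3 * (1 / m + 1), by positivity, ?_⟩
  intro N hN f hf hsum
  -- points of the box land in K
  have hNpos : (0 : ℝ) < N := by exact_mod_cast hN
  have hpt : ∀ x : Site d N, pt x ∈ K := by
    intro x
    constructor
    · constructor
      · show (-1 : ℝ) ≤ ((x.1.val : ℝ) - N) / N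
        rw [le_div_iff₀ hNpos]
        have : (0 : ℝ) ≤ (x.1.val : ℝ) := Nat.cast_nonneg _
        linarith
      · show ((x.1.val : ℝ) - N) / N ≤ 1
        rw [div_le_one hNpos]
        have hx' : (x.1.val : ℝ) ≤ 2 * N := by
          have h2 : x.1.val ≤ 2 * N := by have := x.1.isLt; omega
          exact_mod_cast h2
        linarith
    · intro j _
      constructor
      · show (0 : ℝ) ≤ ((x.2 j).val : ℝ) / N
        exact div_nonneg (Nat.cast_nonneg _) hNpos.le
      · show ((x.2 j).val : ℝ) / N ≤ 1
        rw [div_le_one hNpos]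
        have : ((x.2 j).val : ℝ) < N := by exact_mod_cast (x.2 j).isLt
        linarith
  -- rate bounds
  have hml : ∀ (i : Fin 4) (x : Site d N),
      m ≤ rate4 (fun x => g 0 (pt x)) (fun x => g 1 (pt x)) (fun x => g 2 (pt x)) i x := by
    intro i x
    have hx := hpt x
    have hxV := hKV hx
    have h0 := hgbd 0 _ hxV
    have h1 := hgbd 1 _ hxV
    have h2 := hgbd 2 _ hxV
    have hε' := hKε _ hx
    have hm1 : m ≤ cs := min_le_left _ _
    have hm2 : m ≤ ε := min_le_right _ _
    fin_cases i
    · show m ≤ 1 - g 0 (pt x) - g 1 (pt x) - g 2 (pt x); linarith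
    · show m ≤ g 0 (pt x); linarith
    · show m ≤ g 1 (pt x); linarith
    · show m ≤ g 2 (pt x); linarith
  have hmu : ∀ (i : Fin 4) (x : Site d N),
      rate4 (fun x => g 0 (pt x)) (fun x => g 1 (pt x)) (fun x => g 2 (pt x)) i x ≤ 1 := by
    intro i x
    have hx := hpt x
    have hxV := hKV hx
    have h0 := hgbd 0 _ hxV
    have h1 := hgbd 1 _ hxV
    have h2 := hgbd 2 _ hxV
    fin_cases i
    · show 1 - g 0 (pt x) - g 1 (pt x) - g 2 (pt x) ≤ 1; linarith
    · show g 0 (pt x) ≤ 1; linarith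
    · show g 1 (pt x) ≤ 1; linarith
    · show g 2 (pt x) ≤ 1; linarith
  exact key_bound hd hN lam1 lam2 r hlam1 hlam2 hr _ _ _ m hm0 hml hmu f hf hsum

end SIT
end
end

section
/- Assume λ₁ ≥ λ₂ > 0, r > 0 and d ≥ 1. There exists a constant C > 0, depending only on λ₁, λ₂, r and d, such that: for all triples (ρ₁ᵃ,ρ₂ᵃ,ρ₃ᵃ) and (ρ₁ᵇ,ρ₂ᵇ,ρ₃ᵇ) with each coordinate in [0,1] and ρ₁+ρ₂+ρ₃ ≤ 1, setting Tᵃ = ρ₁ᵃ+ρ₃ᵃ, Rᵃ = 1−ρ₂ᵃ−ρ₃ᵃ and likewise Tᵇ, Rᵇ, one has (F₁(ρ₁ᵃ,Tᵃ,Rᵃ) − F₁(ρ₁ᵇ,Tᵇ,Rᵇ))·(ρ₁ᵃ−ρ₁ᵇ)₊ + (H(ρ₁ᵃ,Tᵃ,Rᵃ) − H(ρ₁ᵇ,Tᵇ,Rᵇ))·(Tᵃ−Tᵇ)₊ + (J(Rᵃ) − J(Rᵇ))·(Rᵃ−Rᵇ)₊ ≤ C·[ (ρ₁ᵃ−ρ₁ᵇ)₊²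 + (Tᵃ−Tᵇ)₊² + (Rᵃ−Rᵇ)₊² ]. -/
noncomputable section

/-- `F₁(ρ₁,T,R) = 2d[(λ₁−λ₂)ρ₁ + λ₂T](R−ρ₁) + T − (r+2)ρ₁`, the first reaction
term in the coordinates `(ρ₁, T, R) = (ρ₁, ρ₁+ρ₃, 1−ρ₂−ρ₃)`. -/
def F1c (d : ℕ) (lam1 lam2 r ρ1 T R : ℝ) : ℝ :=
  2 * d * ((lam1 - lam2) * ρ1 + lam2 * T) * (R - ρ1) + T - (r + 2) * ρ1

/-- `H(ρ₁,T,R) = 2d[(λ₁−λ₂)ρ₁ + λ₂T](1−T) − T`. -/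
def Hc (d : ℕ) (lam1 lam2 ρ1 T R : ℝ) : ℝ :=
  2 * d * ((lam1 - lam2) * ρ1 + lam2 * T) * (1 - T) - T

/-- `J(R) = −(r+1)R + 1`. -/
def Jc (r R : ℝ) : ℝ := -(r + 1) * R + 1

set_option maxHeartbeats 2000000 in
/-- One-sided Lipschitz estimate with positive parts for the
reaction terms in the coordinates `(ρ₁, T, R)`, used in the comparison
principle. -/
theorem comparison_onesided_estimate (d : ℕ) (hd : 1 ≤ d) (lam1 lam2 r : ℝ)
    (hlam : lam2 ≤ lam1) (hlam2 : 0 < lam2) (hr : 0 < r) :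
    ∃ C : ℝ, 0 < C ∧
      ∀ ρ1a ρ2a ρ3a ρ1b ρ2b ρ3b : ℝ,
        ρ1a ∈ Set.Icc (0 : ℝ) 1 → ρ2a ∈ Set.Icc (0 : ℝ) 1 → ρ3a ∈ Set.Icc (0 : ℝ) 1 →
        ρ1b ∈ Set.Icc (0 : ℝ) 1 → ρ2b ∈ Set.Icc (0 : ℝ) 1 → ρ3b ∈ Set.Icc (0 : ℝ) 1 →
        ρ1a + ρ2a + ρ3a ≤ 1 → ρ1b + ρ2b + ρ3b ≤ 1 →
        (F1c d lam1 lam2 r ρ1a (ρ1a + ρ3a) (1 - ρ2a - ρ3a)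
              - F1c d lam1 lam2 r ρ1b (ρ1b + ρ3b) (1 - ρ2b - ρ3b))
            * max (ρ1a - ρ1b) 0
          + (Hc d lam1 lam2 ρ1a (ρ1a + ρ3a) (1 - ρ2a - ρ3a)
              - Hc d lam1 lam2 ρ1b (ρ1b + ρ3b) (1 - ρ2b - ρ3b))
            * max ((ρ1a + ρ3a) - (ρ1b + ρ3b)) 0
          + (Jc r (1 - ρ2a - ρ3a) - Jc r (1 - ρ2b - ρ3b))
            * max ((1 - ρ2a - ρ3a) - (1 - ρ2b - ρ3b)) 0
        ≤ C * ((max (ρ1a - ρ1b) 0) ^ 2 + (max ((ρ1a + ρ3a) - (ρ1b + ρ3b)) 0) ^ 2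
            + (max ((1 - ρ2a - ρ3a) - (1 - ρ2b - ρ3b)) 0) ^ 2) := by
  have hl1 : 0 < lam1 := lt_of_lt_of_le hlam2 hlam
  have hD : (1:ℝ) ≤ (d:ℝ) := by exact_mod_cast hd
  set D := (d:ℝ) with hDdef
  have hD0 : (0:ℝ) ≤ D := by linarith
  refine ⟨3 * (2 * D * lam1 + r + 3), by positivity, ?_⟩
  intro ρ1a ρ2a ρ3a ρ1b ρ2b ρ3b h1a h2a h3a h1b h2b h3b hsa hsb
  obtain ⟨h1a0, h1a1⟩ := h1a
  obtain ⟨h2a0, h2a1⟩ := h2a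
  obtain ⟨h3a0, h3a1⟩ := h3a
  obtain ⟨h1b0, h1b1⟩ := h1b
  obtain ⟨h2b0, h2b1⟩ := h2b
  obtain ⟨h3b0, h3b1⟩ := h3b
  set x := max (ρ1a - ρ1b) 0 with hxdef
  set y := max ((ρ1a + ρ3a) - (ρ1b + ρ3b)) 0 with hydef
  set z := max ((1 - ρ2a - ρ3a) - (1 - ρ2b - ρ3b)) 0 with hzdef
  have hx0 : 0 ≤ x := le_max_right _ _
  have hy0 : 0 ≤ y := le_max_right _ _
  have hz0 : 0 ≤ z := le_max_right _ _
  have hxe : ρ1a - ρ1b ≤ x := le_max_left _ _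
  have hye : (ρ1a + ρ3a) - (ρ1b + ρ3b) ≤ y := le_max_left _ _
  have hze : (1 - ρ2a - ρ3a) - (1 - ρ2b - ρ3b) ≤ z := le_max_left _ _
  set M := 2 * D * lam1 + r + 3 with hMdef
  have hM0 : 0 < M := by positivity
  have hl12 : (0:ℝ) ≤ lam1 - lam2 := by linarith
  have hBb0 : 0 ≤ (lam1 - lam2) * ρ1b + lam2 * (ρ1b + ρ3b) := by
    have u1 := mul_nonneg hl12 h1b0
    have u2 := mul_nonneg hlam2.le (by linarith : 0 ≤ ρ1b + ρ3b)
    linarith only [u1, u2]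
  have hBb1 : (lam1 - lam2) * ρ1b + lam2 * (ρ1b + ρ3b) ≤ lam1 := by
    have u1 := mul_nonneg hl12 (by linarith : 0 ≤ 1 - ρ1b)
    have u2 := mul_nonneg hlam2.le (by linarith : 0 ≤ 1 - (ρ1b + ρ3b))
    linarith only [u1, u2]
  have hRa0 : 0 ≤ (1 - ρ2a - ρ3a) - ρ1a := by linarith
  -- generic nonneg products used in the final linear-combination steps
  have p1 : 0 ≤ D * lam2 * x := mul_nonneg (mul_nonneg hD0 hlam2.le) hx0
  have p2 : 0 ≤ D * (lam1 - lam2) * x := mul_nonneg (mul_nonneg hD0 hl12) hx0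
  have p3 : 0 ≤ D * lam1 * x := mul_nonneg (mul_nonneg hD0 hl1.le) hx0
  have p4 : 0 ≤ r * x := mul_nonneg hr.le hx0
  have q1 : 0 ≤ D * lam2 * y := mul_nonneg (mul_nonneg hD0 hlam2.le) hy0
  have q2 : 0 ≤ D * (lam1 - lam2) * y := mul_nonneg (mul_nonneg hD0 hl12) hy0
  have q3 : 0 ≤ D * lam1 * y := mul_nonneg (mul_nonneg hD0 hl1.le) hy0
  have q4 : 0 ≤ r * y := mul_nonneg hr.le hy0
  have s1 : 0 ≤ D * lam2 * z := mul_nonneg (mul_nonneg hD0 hlam2.le) hz0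
  have s2 : 0 ≤ D * (lam1 - lam2) * z := mul_nonneg (mul_nonneg hD0 hl12) hz0
  have s3 : 0 ≤ D * lam1 * z := mul_nonneg (mul_nonneg hD0 hl1.le) hz0
  have s4 : 0 ≤ r * z := mul_nonneg hr.le hz0
  have key1 :
      (F1c d lam1 lam2 r ρ1a (ρ1a + ρ3a) (1 - ρ2a - ρ3a)
        - F1c d lam1 lam2 r ρ1b (ρ1b + ρ3b) (1 - ρ2b - ρ3b)) * x
      ≤ M * (x + y + z) * x := by
    rcases le_or_gt ρ1a ρ1b with h | h
    · have hx : x = 0 := max_eq_right (by linarith)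
      rw [hx, mul_zero, mul_zero]
    · have hx : x = ρ1a - ρ1b := max_eq_left (by linarith)
      have hF : F1c d lam1 lam2 r ρ1a (ρ1a + ρ3a) (1 - ρ2a - ρ3a)
          - F1c d lam1 lam2 r ρ1b (ρ1b + ρ3b) (1 - ρ2b - ρ3b) ≤ M * (x + y + z) := by
        have hid : F1c d lam1 lam2 r ρ1a (ρ1a + ρ3a) (1 - ρ2a - ρ3a)
            - F1c d lam1 lam2 r ρ1b (ρ1b + ρ3b) (1 - ρ2b - ρ3b)
            = 2 * D * ((lam1 - lam2) * (ρ1a - ρ1b)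
                  + lam2 * ((ρ1a + ρ3a) - (ρ1b + ρ3b))) * ((1 - ρ2a - ρ3a) - ρ1a)
              + 2 * D * ((lam1 - lam2) * ρ1b + lam2 * (ρ1b + ρ3b))
                  * (((1 - ρ2a - ρ3a) - ρ1a) - ((1 - ρ2b - ρ3b) - ρ1b))
              + ((ρ1a + ρ3a) - (ρ1b + ρ3b)) - (r + 2) * (ρ1a - ρ1b) := by
          simp only [F1c]; ring
        have hS0 : 0 ≤ (lam1 - lam2) * (ρ1a - ρ1b) + lam2 * y := by
          have u1 := mul_nonneg hl12 (by linarith : 0 ≤ ρ1a - ρ1b)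
          have u2 := mul_nonneg hlam2.le hy0
          linarith only [u1, u2]
        have b1 : 2 * D * ((lam1 - lam2) * (ρ1a - ρ1b)
              + lam2 * ((ρ1a + ρ3a) - (ρ1b + ρ3b))) * ((1 - ρ2a - ρ3a) - ρ1a)
            ≤ 2 * D * ((lam1 - lam2) * (ρ1a - ρ1b) + lam2 * y) := by
          linarith only [mul_nonneg (mul_nonneg hD0 (mul_nonneg hlam2.le
              (by linarith : 0 ≤ y - ((ρ1a + ρ3a) - (ρ1b + ρ3b))))) hRa0,
            mul_nonneg (mul_nonneg hD0 hS0) (by linarith : 0 ≤ 1 - ((1 - ρ2a - ρ3a) - ρ1a))]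
        have b2 : 2 * D * ((lam1 - lam2) * ρ1b + lam2 * (ρ1b + ρ3b))
              * (((1 - ρ2a - ρ3a) - ρ1a) - ((1 - ρ2b - ρ3b) - ρ1b))
            ≤ 2 * D * lam1 * z := by
          linarith only [mul_nonneg (mul_nonneg hD0 hBb0)
              (by linarith : 0 ≤ z - (((1 - ρ2a - ρ3a) - ρ1a) - ((1 - ρ2b - ρ3b) - ρ1b))),
            mul_nonneg (mul_nonneg hD0 (by linarith : 0 ≤ lam1
              - ((lam1 - lam2) * ρ1b + lam2 * (ρ1b + ρ3b)))) hz0]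
        rw [hid, hMdef, hx]
        have w1 : 0 ≤ D * lam2 * (ρ1a - ρ1b) :=
          mul_nonneg (mul_nonneg hD0 hlam2.le) (by linarith)
        have w2 : 0 ≤ r * (ρ1a - ρ1b) := mul_nonneg hr.le (by linarith)
        have w3 : 0 ≤ D * (lam1 - lam2) * y := q2
        linarith only [b1, b2, hye, h.le, hy0, hz0, w1, w2, w3, q4, s4]
      calc (F1c d lam1 lam2 r ρ1a (ρ1a + ρ3a) (1 - ρ2a - ρ3a)
          - F1c d lam1 lam2 r ρ1b (ρ1b + ρ3b) (1 - ρ2b - ρ3b)) * x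
          ≤ (M * (x + y + z)) * x := mul_le_mul_of_nonneg_right hF hx0
        _ = M * (x + y + z) * x := by ring
  have key2 :
      (Hc d lam1 lam2 ρ1a (ρ1a + ρ3a) (1 - ρ2a - ρ3a)
        - Hc d lam1 lam2 ρ1b (ρ1b + ρ3b) (1 - ρ2b - ρ3b)) * y
      ≤ M * (x + y + z) * y := by
    rcases le_or_gt (ρ1a + ρ3a) (ρ1b + ρ3b) with h | h
    · have hy : y = 0 := max_eq_right (by linarith)
      rw [hy, mul_zero, mul_zero]
    · have hy : y = (ρ1a + ρ3a) - (ρ1b + ρ3b) := max_eq_left (by linarith)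
      have hF : Hc d lam1 lam2 ρ1a (ρ1a + ρ3a) (1 - ρ2a - ρ3a)
          - Hc d lam1 lam2 ρ1b (ρ1b + ρ3b) (1 - ρ2b - ρ3b) ≤ M * (x + y + z) := by
        have hid : Hc d lam1 lam2 ρ1a (ρ1a + ρ3a) (1 - ρ2a - ρ3a)
            - Hc d lam1 lam2 ρ1b (ρ1b + ρ3b) (1 - ρ2b - ρ3b)
            = 2 * D * ((lam1 - lam2) * (ρ1a - ρ1b)
                  + lam2 * ((ρ1a + ρ3a) - (ρ1b + ρ3b))) * (1 - (ρ1a + ρ3a))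
              - 2 * D * ((lam1 - lam2) * ρ1b + lam2 * (ρ1b + ρ3b))
                  * ((ρ1a + ρ3a) - (ρ1b + ρ3b))
              - ((ρ1a + ρ3a) - (ρ1b + ρ3b)) := by
          simp only [Hc]; ring
        have hTa0 : 0 ≤ 1 - (ρ1a + ρ3a) := by linarith
        have hS0 : 0 ≤ (lam1 - lam2) * x + lam2 * ((ρ1a + ρ3a) - (ρ1b + ρ3b)) := by
          have u1 := mul_nonneg hl12 hx0
          have u2 := mul_nonneg hlam2.le (by linarith : 0 ≤ (ρ1a + ρ3a) - (ρ1b + ρ3b))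
          linarith only [u1, u2]
        have b1 : 2 * D * ((lam1 - lam2) * (ρ1a - ρ1b)
              + lam2 * ((ρ1a + ρ3a) - (ρ1b + ρ3b))) * (1 - (ρ1a + ρ3a))
            ≤ 2 * D * ((lam1 - lam2) * x + lam2 * ((ρ1a + ρ3a) - (ρ1b + ρ3b))) := by
          linarith only [mul_nonneg (mul_nonneg hD0 (mul_nonneg hl12
              (by linarith : 0 ≤ x - (ρ1a - ρ1b)))) hTa0,
            mul_nonneg (mul_nonneg hD0 hS0) (by linarith : 0 ≤ 1 - (1 - (ρ1a + ρ3a)))]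
        have b2 : 0 ≤ 2 * D * ((lam1 - lam2) * ρ1b + lam2 * (ρ1b + ρ3b))
              * ((ρ1a + ρ3a) - (ρ1b + ρ3b)) :=
          mul_nonneg (mul_nonneg (by linarith) hBb0) (by linarith)
        rw [hid, hMdef, hy]
        have w1 : 0 ≤ D * (lam1 - lam2) * ((ρ1a + ρ3a) - (ρ1b + ρ3b)) :=
          mul_nonneg (mul_nonneg hD0 hl12) (by linarith)
        have w2 : 0 ≤ r * ((ρ1a + ρ3a) - (ρ1b + ρ3b)) := mul_nonneg hr.le (by linarith)
        linarith only [b1, b2, h.le, hx0, hz0, p1, p4, w1, w2, s3, s4]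
      calc (Hc d lam1 lam2 ρ1a (ρ1a + ρ3a) (1 - ρ2a - ρ3a)
          - Hc d lam1 lam2 ρ1b (ρ1b + ρ3b) (1 - ρ2b - ρ3b)) * y
          ≤ (M * (x + y + z)) * y := mul_le_mul_of_nonneg_right hF hy0
        _ = M * (x + y + z) * y := by ring
  have key3 :
      (Jc r (1 - ρ2a - ρ3a) - Jc r (1 - ρ2b - ρ3b)) * z ≤ M * (x + y + z) * z := by
    rcases le_or_gt (1 - ρ2a - ρ3a) (1 - ρ2b - ρ3b) with h | h
    · have hz : z = 0 := max_eq_right (by linarith)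
      rw [hz, mul_zero, mul_zero]
    · have hz : z = (1 - ρ2a - ρ3a) - (1 - ρ2b - ρ3b) := max_eq_left (by linarith)
      have hF : Jc r (1 - ρ2a - ρ3a) - Jc r (1 - ρ2b - ρ3b) ≤ M * (x + y + z) := by
        have hid : Jc r (1 - ρ2a - ρ3a) - Jc r (1 - ρ2b - ρ3b)
            = -(r + 1) * ((1 - ρ2a - ρ3a) - (1 - ρ2b - ρ3b)) := by simp only [Jc]; ring
        have h1 : -(r + 1) * ((1 - ρ2a - ρ3a) - (1 - ρ2b - ρ3b)) ≤ 0 := by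
          have u1 := mul_nonneg (by linarith : (0:ℝ) ≤ r + 1)
            (by linarith : 0 ≤ (1 - ρ2a - ρ3a) - (1 - ρ2b - ρ3b))
          linarith only [u1]
        have h2 : 0 ≤ M * (x + y + z) := mul_nonneg hM0.le (by linarith)
        linarith only [hid.le, hid.ge, h1, h2]
      calc (Jc r (1 - ρ2a - ρ3a) - Jc r (1 - ρ2b - ρ3b)) * z
          ≤ (M * (x + y + z)) * z := mul_le_mul_of_nonneg_right hF hz0
        _ = M * (x + y + z) * z := by ring
  have hsum : M * (x + y + z) * x + M * (x + y + z) * y + M * (x + y + z) * z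
      ≤ 3 * M * (x ^ 2 + y ^ 2 + z ^ 2) := by
    linarith only [mul_nonneg hM0.le (sq_nonneg (x - y)), mul_nonneg hM0.le (sq_nonneg (y - z)),
      mul_nonneg hM0.le (sq_nonneg (x - z))]
  have hfinal := (add_le_add (add_le_add key1 key2) key3).trans hsum
  calc _ ≤ 3 * M * (x ^ 2 + y ^ 2 + z ^ 2) := hfinal
    _ = 3 * (2 * D * lam1 + r + 3) * (x ^ 2 + y ^ 2 + z ^ 2) := by rw [hMdef]

end
end
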